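/- arXiv:1612.07915 — 7 statements merged into one kernel-verified Lean document; each statement's English description precedes it below -/
import Mathlib

section
/- Let P be a nonempty polyhedral set in ℝ^d. Then Σ_{F face of P} 1_{relint F + N(P,F)} = 1 everywhere on ℝ^d; that is, the sets relint F + N(P,F), for F ranging over the nonempty faces of P, form a partition of ℝ^d. -/
open RealInnerProductSpace Pointwise

noncomputable section

abbrev Euc (d : ℕ) := EuclideanSpace ℝ (Fin d)

/-- A polyhedral set: intersection of finitely many closed half-spaces. -/
def IsPolyhedral {d : ℕ} (P : Set (Euc d)) : Prop :=
  ∃ s : Finset (Euc d × ℝ), P = {x | ∀ h ∈ s, ⟪h.1, x⟫ ≤ h.2}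

/-- A (nonempty) face of a convex set: a nonempty convex extreme subset. -/
def IsFaceOf {d : ℕ} (P F : Set (Euc d)) : Prop :=
  F.Nonempty ∧ Convex ℝ F ∧ IsExtreme ℝ P F

/-- The normal cone of `P` at the face `F`. -/
def normalCone {d : ℕ} (P F : Set (Euc d)) : Set (Euc d) :=
  {u | ∀ f ∈ F, ∀ z ∈ P, ⟪u, z - f⟫ ≤ 0}

/-- The dimension of a set: the rank of the direction of its affine hull. -/
def sdim {d : ℕ} (F : Set (Euc d)) : ℕ :=
  Module.finrank ℝ (affineSpan ℝ F).direction

/-- φ_P(x) = Σ_{F face of P} (-1)^{dim F} 1_{F - N(P,F)}(x). -/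
def phi {d : ℕ} (P : Set (Euc d)) (x : Euc d) : ℤ :=
  ∑ᶠ F ∈ {F : Set (Euc d) | IsFaceOf P F},
    (-1 : ℤ) ^ sdim F * (F - normalCone P F).indicator (fun _ => (1 : ℤ)) x

/-- A set is line-free if it contains no affine line. -/
def LineFree {d : ℕ} (P : Set (Euc d)) : Prop :=
  ∀ x y : Euc d, y ≠ 0 → ∃ t : ℝ, x + t • y ∉ P

lemma mem_relint_iff {d : ℕ} {C : Set (Euc d)} {y : Euc d} :
    y ∈ intrinsicInterior ℝ C ↔
      y ∈ C ∧ ∃ ε > 0, ∀ z ∈ affineSpan ℝ C, dist z y < ε → z ∈ C := by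
  constructor
  · rintro ⟨y', hy', rfl⟩
    have hyC : (y' : Euc d) ∈ C := interior_subset (s := (Subtype.val ⁻¹' C : Set (affineSpan ℝ C))) hy'
    refine ⟨hyC, ?_⟩
    rw [mem_interior_iff_mem_nhds, Metric.mem_nhds_iff] at hy'
    obtain ⟨ε, hε, hball⟩ := hy'
    refine ⟨ε, hε, fun z hz hdist => ?_⟩
    have : (⟨z, hz⟩ : affineSpan ℝ C) ∈ Metric.ball y' ε := by
      rw [Metric.mem_ball, Subtype.dist_eq]; exact hdist
    exact hball this
  · rintro ⟨hyC, ε, hε, h⟩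
    have hy' : y ∈ affineSpan ℝ C := subset_affineSpan ℝ C hyC
    refine ⟨⟨y, hy'⟩, ?_, rfl⟩
    rw [mem_interior_iff_mem_nhds, Metric.mem_nhds_iff]
    exact ⟨ε, hε, fun z hz => h z z.2 (by rwa [Metric.mem_ball, Subtype.dist_eq] at hz)⟩


/-- From a relative interior point, one can extend a segment slightly past it. -/
lemma relint_extend {d : ℕ} {C : Set (Euc d)} {y z : Euc d}
    (hy : y ∈ intrinsicInterior ℝ C) (hz : z ∈ C) : ∃ ε : ℝ, 0 < ε ∧ y + ε • (y - z) ∈ C := by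
  rw [mem_relint_iff] at hy
  obtain ⟨hyC, ε, hε, h⟩ := hy
  by_cases hzy : z = y
  · exact ⟨1, one_pos, by simp [hzy, hyC]⟩
  · have hnorm : 0 < ‖y - z‖ := by
      rw [norm_pos_iff, sub_ne_zero]; exact fun h' => hzy h'.symm
    set δ := ε / (2 * ‖y - z‖) with hδ
    have hδpos : 0 < δ := by positivity
    refine ⟨δ, hδpos, h _ ?_ ?_⟩
    · have := AffineSubspace.smul_vsub_vadd_mem (affineSpan ℝ C) δ
        (subset_affineSpan ℝ C hyC) (subset_affineSpan ℝ C hz) (subset_affineSpan ℝ C hyC)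
      simpa [vsub_eq_sub, vadd_eq_add, add_comm] using this
    · have : dist (y + δ • (y - z)) y = δ * ‖y - z‖ := by
        rw [dist_eq_norm]
        simp [norm_smul, abs_of_pos hδpos]
      rw [this, hδ]
      rw [div_mul_eq_mul_div, mul_comm]
      rw [div_lt_iff₀ (by positivity)]
      nlinarith
  
/-- Convex combination of a point of C with a relative interior point is in the relative interior. -/
lemma combo_mem_relint {d : ℕ} {C : Set (Euc d)} (hC : Convex ℝ C) {z w : Euc d}
    (hz : z ∈ C) (hw : w ∈ intrinsicInterior ℝ C) {t : ℝ} (ht0 : 0 < t) (ht1 : t < 1) :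
    t • z + (1 - t) • w ∈ intrinsicInterior ℝ C := by
  rw [mem_relint_iff] at hw ⊢
  obtain ⟨hwC, ε, hε, h⟩ := hw
  have h1t : (0:ℝ) < 1 - t := by linarith
  set y := t • z + (1 - t) • w with hy
  have hyC : y ∈ C := hC hz hwC ht0.le h1t.le (by ring)
  refine ⟨hyC, (1 - t) * ε, by positivity, fun p hp hdist => ?_⟩
  set q := w + (1 - t)⁻¹ • (p - y) with hq
  have hqspan : q ∈ affineSpan ℝ C := by
    have := AffineSubspace.smul_vsub_vadd_mem (affineSpan ℝ C) (1 - t)⁻¹ hp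
      (subset_affineSpan ℝ C hyC) (subset_affineSpan ℝ C hwC)
    simpa [vsub_eq_sub, vadd_eq_add, add_comm] using this
  have hqdist : dist q w < ε := by
    have hqw : q - w = (1 - t)⁻¹ • (p - y) := by rw [hq]; abel
    rw [dist_eq_norm, hqw, norm_smul, Real.norm_eq_abs, abs_of_pos (by positivity)]
    rw [dist_eq_norm] at hdist
    rw [inv_mul_lt_iff₀ h1t]
    linarith
  have hqC : q ∈ C := h q hqspan hqdist
  have hpeq : p = t • z + (1 - t) • q := by
    rw [hq, smul_add, smul_smul, mul_inv_cancel₀ h1t.ne', one_smul, hy]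
    abel
  rw [hpeq]
  exact hC hz hqC ht0.le h1t.le (by ring)

/-- The minimal face of `P` containing `y`. -/
def minFace {d : ℕ} (P : Set (Euc d)) (y : Euc d) : Set (Euc d) :=
  {z | z ∈ P ∧ ∃ ε : ℝ, 0 < ε ∧ y + ε • (y - z) ∈ P}

lemma self_mem_minFace {d : ℕ} {P : Set (Euc d)} {y : Euc d} (hy : y ∈ P) :
    y ∈ minFace P y := ⟨hy, 1, one_pos, by simpa using hy⟩

lemma minFace_subset {d : ℕ} {P : Set (Euc d)} {y : Euc d} : minFace P y ⊆ P :=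
  fun _ hz => hz.1

/-- helper: shrinking the extension parameter. -/
lemma minFace_shrink {d : ℕ} {P : Set (Euc d)} (hP : Convex ℝ P) {y z : Euc d} (hy : y ∈ P)
    {ε ε' : ℝ} (hε' : 0 < ε') (hle : ε' ≤ ε) (h : y + ε • (y - z) ∈ P) :
    y + ε' • (y - z) ∈ P := by
  have hε : 0 < ε := lt_of_lt_of_le hε' hle
  have key : y + ε' • (y - z) = (1 - ε'/ε) • y + (ε'/ε) • (y + ε • (y - z)) := by
    have : (ε'/ε) * ε = ε' := div_mul_cancel₀ _ hε.ne'
    match_scalars <;> field_simp <;> ring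
  rw [key]
  exact hP hy h (by rw [sub_nonneg, div_le_one hε]; exact hle) (by positivity) (by ring)

lemma minFace_convex {d : ℕ} {P : Set (Euc d)} (hP : Convex ℝ P) {y : Euc d} (hy : y ∈ P) :
    Convex ℝ (minFace P y) := by
  rintro z₁ ⟨hz₁, ε₁, hε₁, h₁⟩ z₂ ⟨hz₂, ε₂, hε₂, h₂⟩ a b ha hb hab
  rcases ha.eq_or_lt with rfl | ha'
  · simpa [show b = 1 by linarith] using ⟨hz₂, ε₂, hε₂, h₂⟩
  rcases hb.eq_or_lt with rfl | hb'
  · simpa [show a = 1 by linarith] using ⟨hz₁, ε₁, hε₁, h₁⟩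
  obtain rfl : b = 1 - a := by linarith
  refine ⟨hP hz₁ hz₂ ha hb hab, min ε₁ ε₂, lt_min hε₁ hε₂, ?_⟩
  have k₁ : y + (min ε₁ ε₂) • (y - z₁) ∈ P := minFace_shrink hP hy (lt_min hε₁ hε₂) (min_le_left _ _) h₁
  have k₂ : y + (min ε₁ ε₂) • (y - z₂) ∈ P := minFace_shrink hP hy (lt_min hε₁ hε₂) (min_le_right _ _) h₂
  have key : y + (min ε₁ ε₂) • (y - (a • z₁ + (1 - a) • z₂)) =
      a • (y + (min ε₁ ε₂) • (y - z₁)) + (1 - a) • (y + (min ε₁ ε₂) • (y - z₂)) := by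
    match_scalars <;> ring
  rw [key]
  exact hP k₁ k₂ ha hb hab

lemma minFace_extreme {d : ℕ} {P : Set (Euc d)} (hP : Convex ℝ P) {y : Euc d} (hy : y ∈ P) :
    IsExtreme ℝ P (minFace P y) := by
  refine ⟨minFace_subset, ?_⟩
  have main : ∀ x₁, x₁ ∈ P → ∀ x₂, x₂ ∈ P → ∀ x, x ∈ minFace P y →
      x ∈ openSegment ℝ x₁ x₂ → x₁ ∈ minFace P y := by
    rintro x₁ hx₁ x₂ hx₂ x ⟨hxP, ε, hε, hq⟩ ⟨a, b, ha, hb, hab, hx⟩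
    obtain rfl : b = 1 - a := by linarith
    set s := 1 + ε * (1 - a) with hs
    have hspos : (0:ℝ) < s := by nlinarith
    refine ⟨hx₁, ε * a / s, by positivity, ?_⟩
    have key : y + (ε * a / s) • (y - x₁) =
        (1/s) • (y + ε • (y - x)) + (ε * (1 - a) / s) • x₂ := by
      rw [← hx]
      match_scalars <;> field_simp <;> ring
    rw [key]
    have hb' : 0 ≤ ε * (1 - a) / s := by positivity
    exact hP hq hx₂ (by positivity) hb' (by field_simp; exact hs.symm)
  intro x₁ hx₁ x₂ hx₂ x hx hseg
  exact main x₁ hx₁ x₂ hx₂ x hx hseg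

lemma extension_mem_minFace {d : ℕ} {P : Set (Euc d)} (hP : Convex ℝ P) {y z : Euc d}
    (hy : y ∈ P) (hz : z ∈ P) {ε : ℝ} (hε : 0 < ε) (h : y + ε • (y - z) ∈ P) :
    y + ε • (y - z) ∈ minFace P y := by
  refine ⟨h, ε⁻¹, by positivity, ?_⟩
  have key : y + ε⁻¹ • (y - (y + ε • (y - z))) = z := by
    match_scalars <;> field_simp <;> ring
  rw [key]; exact hz

lemma mem_relint_minFace {d : ℕ} {P : Set (Euc d)} (hP : Convex ℝ P) {y : Euc d} (hy : y ∈ P) :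
    y ∈ intrinsicInterior ℝ (minFace P y) := by
  have hconv : Convex ℝ (minFace P y) := minFace_convex hP hy
  obtain ⟨w, hw⟩ := Set.Nonempty.intrinsicInterior hconv ⟨y, self_mem_minFace hy⟩
  have hwF : w ∈ minFace P y := intrinsicInterior_subset hw
  obtain ⟨hwP, ε, hε, hq⟩ := hwF
  have hz' : y + ε • (y - w) ∈ minFace P y := extension_mem_minFace hP hy hwP hε hq
  have hε1 : (0:ℝ) < 1 + ε := by linarith
  have key : y = (1/(1+ε)) • (y + ε • (y - w)) + (1 - 1/(1+ε)) • w := by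
    match_scalars <;> field_simp <;> ring
  have := combo_mem_relint (t := 1/(1+ε)) hconv hz' hw (by positivity)
    (by rw [div_lt_one hε1]; linarith)
  rwa [← key] at this

lemma minFace_isFaceOf {d : ℕ} {P : Set (Euc d)} (hP : Convex ℝ P) {y : Euc d} (hy : y ∈ P) :
    IsFaceOf P (minFace P y) :=
  ⟨⟨y, self_mem_minFace hy⟩, minFace_convex hP hy, minFace_extreme hP hy⟩

/-- A face is determined by any of its relative interior points. -/
lemma face_eq_minFace {d : ℕ} {P F : Set (Euc d)} (hF : IsFaceOf P F) {y : Euc d}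
    (hy : y ∈ intrinsicInterior ℝ F) : F = minFace P y := by
  obtain ⟨hFne, hFconv, hFsub, hFext⟩ := hF
  have hyF : y ∈ F := intrinsicInterior_subset hy
  apply Set.Subset.antisymm
  · intro z hz
    obtain ⟨ε, hε, h⟩ := relint_extend hy hz
    exact ⟨hFsub hz, ε, hε, hFsub h⟩
  · rintro z ⟨hzP, ε, hε, hq⟩
    have hqP : y + ε • (y - z) ∈ P := hq
    have hseg : y ∈ openSegment ℝ z (y + ε • (y - z)) := by
      refine ⟨ε / (1 + ε), 1 / (1 + ε), by positivity, by positivity, by field_simp; ring, ?_⟩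
      match_scalars <;> field_simp <;> ring
    exact hFext hzP hqP hyF hseg

/-- Polyhedral sets are convex. -/
lemma IsPolyhedral.convex {d : ℕ} {P : Set (Euc d)} (hP : IsPolyhedral P) : Convex ℝ P := by
  obtain ⟨s, rfl⟩ := hP
  intro x hx y hy a b ha hb hab
  intro h hs
  have h1 := hx h hs
  have h2 := hy h hs
  calc ⟪h.1, a • x + b • y⟫ = a * ⟪h.1, x⟫ + b * ⟪h.1, y⟫ := by
        rw [inner_add_right, real_inner_smul_right, real_inner_smul_right]
    _ ≤ a * h.2 + b * h.2 := by
        gcongr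
    _ = h.2 := by rw [← add_mul, hab, one_mul]

lemma IsPolyhedral.isClosed {d : ℕ} {P : Set (Euc d)} (hP : IsPolyhedral P) : IsClosed P := by
  obtain ⟨s, rfl⟩ := hP
  have : {x : Euc d | ∀ h ∈ s, ⟪h.1, x⟫ ≤ h.2} = ⋂ h ∈ s, {x : Euc d | ⟪h.1, x⟫ ≤ h.2} := by
    ext x; simp
  rw [this]
  exact isClosed_biInter fun h _ =>
    isClosed_le (Continuous.inner continuous_const continuous_id) continuous_const


theorem relint_plus_normalCone_partition {d : ℕ} (P : Set (Euc d))
    (hP : IsPolyhedral P) (hne : P.Nonempty) :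
    ∀ x : Euc d,
      ∑ᶠ F ∈ {F : Set (Euc d) | IsFaceOf P F},
        (intrinsicInterior ℝ F + normalCone P F).indicator (fun _ => (1 : ℤ)) x = 1 := by
  intro x
  have hconv : Convex ℝ P := hP.convex
  have hclosed : IsClosed P := hP.isClosed
  -- metric projection of x onto P
  obtain ⟨y, hyP, hproj⟩ : ∃ y ∈ P, ∀ z ∈ P, ⟪x - y, z - y⟫ ≤ 0 := by
    obtain ⟨y, hyP, hmin⟩ :=
      exists_norm_eq_iInf_of_complete_convex hne (hclosed.isComplete) hconv x
    exact ⟨y, hyP, (norm_eq_iInf_iff_real_inner_le_zero hconv hyP).1 hmin⟩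
  set F₀ := minFace P y with hF₀
  have hface₀ : IsFaceOf P F₀ := minFace_isFaceOf hconv hyP
  -- existence
  have hxmem : x ∈ intrinsicInterior ℝ F₀ + normalCone P F₀ := by
    have hurel : y ∈ intrinsicInterior ℝ F₀ := mem_relint_minFace hconv hyP
    have hN : x - y ∈ normalCone P F₀ := by
      rintro f ⟨hfP, ε, hε, hq⟩ z hz
      have h1 : ⟪x - y, y - f⟫ ≤ 0 := by
        have := hproj _ hq
        have heq : y + ε • (y - f) - y = ε • (y - f) := by abel
        rw [heq, real_inner_smul_right] at this
        nlinarith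
      have h2 : ⟪x - y, z - y⟫ ≤ 0 := hproj z hz
      have heq : z - f = (z - y) + (y - f) := by abel
      rw [heq, inner_add_right]
      linarith
    exact ⟨y, hurel, x - y, hN, by module⟩
  -- uniqueness
  have huniq : ∀ F : Set (Euc d), IsFaceOf P F →
      x ∈ intrinsicInterior ℝ F + normalCone P F → F = F₀ := by
    rintro F hF ⟨f, hf, u, hu, hfu⟩
    have hfF : f ∈ F := intrinsicInterior_subset hf
    have hfP : f ∈ P := hF.2.2.1 hfF
    have hfy : f = y := by
      have h1 : ⟪x - f, y - f⟫ ≤ 0 := by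
        have := hu f hfF y hyP
        have : u = x - f := by rw [← hfu]; module
        rw [← this]; exact hu f hfF y hyP
      have h2 : ⟪x - y, f - y⟫ ≤ 0 := hproj f hfP
      have key : ⟪y - f, y - f⟫ ≤ 0 := by
        have heq : (y : Euc d) - f = (x - f) - (x - y) := by abel
        calc ⟪y - f, y - f⟫ = ⟪x - f, y - f⟫ - ⟪x - y, y - f⟫ := by
              rw [heq, inner_sub_left]
          _ = ⟪x - f, y - f⟫ + ⟪x - y, f - y⟫ := by
              rw [show (f : Euc d) - y = -(y - f) by abel, inner_neg_right]; ring
          _ ≤ 0 := by linarith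
      have : ‖y - f‖ ^ 2 ≤ 0 := by rwa [← real_inner_self_eq_norm_sq]
      have : y - f = 0 := by
        have := norm_nonneg (y - f)
        have h0 : ‖y - f‖ = 0 := by nlinarith
        rwa [norm_eq_zero] at h0
      rw [← sub_eq_zero]; rw [show f - y = -(y - f) by abel, this, neg_zero]
    subst hfy
    exact face_eq_minFace hF hf
  -- compute the finsum
  have hmain : ∀ F : Set (Euc d), F ≠ F₀ →
      ({F : Set (Euc d) | IsFaceOf P F}).indicator
        (fun F => (intrinsicInterior ℝ F + normalCone P F).indicator (fun _ => (1 : ℤ)) x) F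
        = 0 := by
    intro F hFne
    by_cases hF : IsFaceOf P F
    · rw [Set.indicator_of_mem (show F ∈ {F : Set (Euc d) | IsFaceOf P F} from hF)]
      rw [Set.indicator_of_notMem]
      exact fun hx => hFne (huniq F hF hx)
    · rw [Set.indicator_of_notMem (show F ∉ {F : Set (Euc d) | IsFaceOf P F} from hF)]
  rw [finsum_mem_def, finsum_eq_single _ F₀ hmain,
    Set.indicator_of_mem (show F₀ ∈ {F : Set (Euc d) | IsFaceOf P F} from hface₀),
    Set.indicator_of_mem hxmem]
end
end

section
/- Let P be a nonempty polyhedral set in ℝ^d and let F be a nonempty face of P. Then the normal cone satisfies N(P,F) = ⋃_{H face of P, F ⊆ H} relint N(P,H), and this union is disjoint. -/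
open RealInnerProductSpace Pointwise

noncomputable section

section Aux

open Set

variable {V : Type*} [NormedAddCommGroup V] [NormedSpace ℝ V]

variable {V : Type*} [NormedAddCommGroup V] [NormedSpace ℝ V]

theorem mem_intrinsicInterior_iff_ball {s : Set V} {x : V} :
    x ∈ intrinsicInterior ℝ s ↔ x ∈ affineSpan ℝ s ∧
      ∃ ε > 0, ∀ z ∈ affineSpan ℝ s, dist z x < ε → z ∈ s := by
  constructor
  · rintro hx
    rw [intrinsicInterior] at hx
    obtain ⟨x', hx', rfl⟩ := hx
    refine ⟨x'.2, ?_⟩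
    rw [mem_interior_iff_mem_nhds, Metric.mem_nhds_iff] at hx'
    obtain ⟨ε, hε, hball⟩ := hx'
    refine ⟨ε, hε, fun z hz hdist => ?_⟩
    have : (⟨z, hz⟩ : affineSpan ℝ s) ∈ Metric.ball x' ε := by
      simpa [Metric.mem_ball, Subtype.dist_eq] using hdist
    exact hball this
  · rintro ⟨hx, ε, hε, h⟩
    rw [intrinsicInterior]
    refine ⟨⟨x, hx⟩, ?_, rfl⟩
    rw [mem_interior_iff_mem_nhds, Metric.mem_nhds_iff]
    refine ⟨ε, hε, fun z hz => ?_⟩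
    exact h z z.2 (by simpa [Metric.mem_ball, Subtype.dist_eq] using hz)

end Aux

section Cone

open Set

variable {V : Type*} [NormedAddCommGroup V] [InnerProductSpace ℝ V] [FiniteDimensional ℝ V]
variable {ι : Type*}

variable {V : Type*} [NormedAddCommGroup V] [InnerProductSpace ℝ V] [FiniteDimensional ℝ V]
variable {ι : Type*}

/-- The cone generated by the vectors `v i`, `i ∈ t`. -/
def fcone (t : Finset ι) (v : ι → V) : Set V :=
  {x | ∃ lam : ι → ℝ, (∀ i ∈ t, 0 ≤ lam i) ∧ x = ∑ i ∈ t, lam i • v i}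

theorem fcone_mono {t u : Finset ι} (h : t ⊆ u) (v : ι → V) : fcone t v ⊆ fcone u v := by
  rintro x ⟨lam, hlam, rfl⟩
  classical
  refine ⟨fun i => if i ∈ t then lam i else 0, fun i _ => ?_, ?_⟩
  · by_cases hit : i ∈ t
    · simpa [hit] using hlam i hit
    · simp [hit]
  · rw [← Finset.sum_subset h (by intro i _ hit; simp [hit])]
    exact Finset.sum_congr rfl fun i hi => by simp [hi]

theorem fcone_isClosed (t : Finset ι) (v : ι → V) : IsClosed (fcone t v) := by
  classical
  induction t using Finset.strongInduction with
  | _ t IH =>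
  by_cases hli : LinearIndependent ℝ (fun i : {x // x ∈ t} => v i)
  · -- linearly independent generators: closed embedding image of the orthant
    set T : ({x // x ∈ t} → ℝ) →ₗ[ℝ] V :=
      { toFun := fun g => ∑ i, g i • v i
        map_add' := fun g g' => by simp [add_smul, Finset.sum_add_distrib]
        map_smul' := fun c g => by simp [smul_smul, Finset.smul_sum] } with hT
    have hinj : Function.Injective T := by
      rw [injective_iff_map_eq_zero]
      intro g hg
      funext i
      exact Fintype.linearIndependent_iff.1 hli g hg i
    have himg : fcone t v = T '' {g | ∀ i, 0 ≤ g i} := by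
      ext x
      constructor
      · rintro ⟨lam, hlam, rfl⟩
        refine ⟨fun i => lam i, fun i => hlam i i.2, ?_⟩
        exact Finset.sum_coe_sort t (fun i => lam i • v i)
      · rintro ⟨g, hg, rfl⟩
        refine ⟨fun j => if h : j ∈ t then g ⟨j, h⟩ else 0,
          fun i hi => by simp only [hi, dif_pos]; exact hg _, ?_⟩
        simp only [hT, LinearMap.coe_mk, AddHom.coe_mk]
        rw [← Finset.sum_coe_sort t]
        exact Finset.sum_congr rfl fun i _ => by simp
    rw [himg]
    refine (T.isClosedEmbedding_of_injective (LinearMap.ker_eq_bot.2 hinj)).isClosedMap _ ?_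
    have : {g : {x // x ∈ t} → ℝ | ∀ i, 0 ≤ g i} = ⋂ i, {g | 0 ≤ g i} := by
      ext g; simp [Set.mem_iInter]
    rw [this]
    exact isClosed_iInter fun i => isClosed_le continuous_const (continuous_apply i)
  · -- dependent generators: union of smaller cones
    obtain ⟨g₀, hg₀sum, i₀, hi₀⟩ := Fintype.not_linearIndependent_iff.1 hli
    obtain ⟨g, hgsum, i₁, hi₁⟩ :
        ∃ g : {x // x ∈ t} → ℝ, ∑ i, g i • v i = 0 ∧ ∃ i, 0 < g i := by
      rcases lt_or_gt_of_ne hi₀ with h | h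
      · refine ⟨-g₀, ?_, i₀, by simpa using h⟩
        simp only [Pi.neg_apply, neg_smul]
        rw [Finset.sum_neg_distrib, hg₀sum, neg_zero]
      · exact ⟨g₀, hg₀sum, i₀, h⟩
    set c : ι → ℝ := fun j => if h : j ∈ t then g ⟨j, h⟩ else 0 with hc
    have hcsum : ∑ j ∈ t, c j • v j = 0 := by
      rw [← hgsum, ← Finset.sum_coe_sort t]
      exact Finset.sum_congr rfl fun i _ => by simp [hc]
    set K : Finset ι := t.filter (fun j => 0 < c j) with hK
    have hKne : K.Nonempty := ⟨i₁, by simp only [hK, Finset.mem_filter]; exact ⟨i₁.2, by simp [hc, i₁.2]; exact hi₁⟩⟩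
    have hKt : ∀ j ∈ K, j ∈ t := fun j hj => (Finset.mem_filter.1 hj).1
    have key : fcone t v = ⋃ j ∈ K, fcone (t.erase j) v := by
      ext x
      constructor
      · rintro ⟨lam, hlam, hx⟩
        obtain ⟨j₀, hj₀K, hj₀min⟩ := K.exists_min_image (fun j => lam j / c j) hKne
        have hcj₀ : 0 < c j₀ := (Finset.mem_filter.1 hj₀K).2
        set r : ℝ := lam j₀ / c j₀ with hr
        have hr0 : 0 ≤ r := div_nonneg (hlam j₀ (hKt _ hj₀K)) hcj₀.le
        set lam' : ι → ℝ := fun j => lam j - r * c j with hlam'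
        have hlam'nn : ∀ j ∈ t, 0 ≤ lam' j := by
          intro j hj
          by_cases hjK : j ∈ K
          · have hcj : 0 < c j := (Finset.mem_filter.1 hjK).2
            have := hj₀min j hjK
            rw [div_le_div_iff₀ hcj₀ hcj] at this
            simp only [hlam', sub_nonneg, hr]
            rw [div_mul_eq_mul_div, div_le_iff₀ hcj₀]
            linarith
          · have hcj : c j ≤ 0 := by
              by_contra hpos
              exact hjK (Finset.mem_filter.2 ⟨hj, lt_of_not_ge hpos⟩)
            have h1 : 0 ≤ -(r * c j) := by nlinarith
            have h2 := hlam j hj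
            simp only [hlam']
            linarith
        have hlam'j₀ : lam' j₀ = 0 := by
          simp only [hlam', hr]
          field_simp; ring
        have hsum' : x = ∑ j ∈ t, lam' j • v j := by
          simp only [hlam', sub_smul, Finset.sum_sub_distrib, mul_smul]
          rw [← Finset.smul_sum, hcsum]
          simpa using hx
        refine Set.mem_biUnion hj₀K ⟨lam', fun j hj => hlam'nn j (Finset.mem_of_mem_erase hj), ?_⟩
        rw [hsum', ← Finset.add_sum_erase t _ (hKt _ hj₀K), hlam'j₀]
        simp
      · intro hx
        obtain ⟨j, hj, hxj⟩ := Set.mem_iUnion₂.1 hx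
        exact fcone_mono (Finset.erase_subset _ _) v hxj
    rw [key]
    exact isClosed_biUnion_finset fun j hj => IH _ (Finset.erase_ssubset (hKt _ hj))

theorem zero_mem_fcone (t : Finset ι) (v : ι → V) : (0 : V) ∈ fcone t v :=
  ⟨0, fun i _ => le_refl 0, by simp⟩

theorem gen_mem_fcone {t : Finset ι} (v : ι → V) {i : ι} (hi : i ∈ t) : v i ∈ fcone t v := by
  classical
  refine ⟨fun j => if j = i then 1 else 0, fun j _ => by positivity, ?_⟩
  rw [Finset.sum_eq_single i (fun j _ hji => by simp [hji]) (fun h => absurd hi h)]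
  simp

theorem smul_mem_fcone {t : Finset ι} {v : ι → V} {x : V} {r : ℝ} (hr : 0 ≤ r)
    (hx : x ∈ fcone t v) : r • x ∈ fcone t v := by
  obtain ⟨lam, hlam, rfl⟩ := hx
  exact ⟨fun i => r * lam i, fun i hi => mul_nonneg hr (hlam i hi),
    by simp [Finset.smul_sum, mul_smul]⟩

theorem add_mem_fcone {t : Finset ι} {v : ι → V} {x y : V}
    (hx : x ∈ fcone t v) (hy : y ∈ fcone t v) : x + y ∈ fcone t v := by
  obtain ⟨lam, hlam, rfl⟩ := hx
  obtain ⟨mu, hmu, rfl⟩ := hy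
  exact ⟨fun i => lam i + mu i, fun i hi => add_nonneg (hlam i hi) (hmu i hi),
    by simp [add_smul, Finset.sum_add_distrib]⟩

theorem fcone_convex (t : Finset ι) (v : ι → V) : Convex ℝ (fcone t v) := by
  intro x hx y hy a b ha hb hab
  exact add_mem_fcone (smul_mem_fcone ha hx) (smul_mem_fcone hb hy)

/-- Farkas-type separation: a point not in a finitely generated cone can be separated by
a vector `y` which has nonpositive inner product with all generators. -/
theorem exists_dual_of_not_mem_fcone {t : Finset ι} {v : ι → V} {x : V}
    (hx : x ∉ fcone t v) : ∃ y : V, (∀ i ∈ t, ⟪v i, y⟫ ≤ 0) ∧ 0 < ⟪x, y⟫ := by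
  obtain ⟨f, u0, hfs, hfx⟩ :=
    geometric_hahn_banach_closed_point (fcone_convex t v) (fcone_isClosed t v) hx
  have hu0 : 0 < u0 := by simpa using hfs 0 (zero_mem_fcone t v)
  have hfc : ∀ c ∈ fcone t v, f c ≤ 0 := by
    intro c hc
    by_contra hpos
    push_neg at hpos
    obtain ⟨n, hn⟩ := exists_nat_gt (u0 / f c)
    have hmem : (n : ℝ) • c ∈ fcone t v := smul_mem_fcone (by positivity) hc
    have := hfs _ hmem
    rw [map_smul, smul_eq_mul] at this
    rw [div_lt_iff₀ hpos] at hn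
    linarith
  refine ⟨(InnerProductSpace.toDual ℝ V).symm f, fun i hi => ?_, ?_⟩
  · rw [real_inner_comm, InnerProductSpace.toDual_symm_apply]
    exact hfc _ (gen_mem_fcone v hi)
  · rw [real_inner_comm, InnerProductSpace.toDual_symm_apply]
    linarith

variable {V : Type*} [NormedAddCommGroup V] [InnerProductSpace ℝ V] [FiniteDimensional ℝ V]

/-- A point of `H` at which every constraint that is somewhere slack on `H` is slack. -/
theorem exists_slack_point {s : Finset (V × ℝ)} {H : Set V} (hHne : H.Nonempty)
    (hHconv : Convex ℝ H) (hHP : ∀ x ∈ H, ∀ j ∈ s, ⟪j.1, x⟫ ≤ j.2) :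
    ∃ x₀ ∈ H, ∀ j ∈ s, (∃ x ∈ H, ⟪j.1, x⟫ < j.2) → ⟪j.1, x₀⟫ < j.2 := by
  classical
  suffices h : ∀ t : Finset (V × ℝ), t ⊆ s →
      ∃ x₀ ∈ H, ∀ j ∈ t, (∃ x ∈ H, ⟪j.1, x⟫ < j.2) → ⟪j.1, x₀⟫ < j.2 from h s le_rfl
  intro t
  induction t using Finset.induction_on with
  | empty => exact fun _ => hHne.imp (fun x hx => ⟨hx, by simp⟩)
  | @insert j t hj IH =>
    intro hsub
    obtain ⟨x₀, hx₀H, hx₀⟩ := IH (fun i hi => hsub (Finset.mem_insert_of_mem hi))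
    by_cases hslack : ∃ x ∈ H, ⟪j.1, x⟫ < j.2
    · obtain ⟨xj, hxjH, hxj⟩ := hslack
      set m : V := (1/2 : ℝ) • x₀ + (1/2 : ℝ) • xj with hm
      have hmH : m ∈ H := hHconv hx₀H hxjH (by norm_num) (by norm_num) (by norm_num)
      refine ⟨m, hmH, fun i hi hex => ?_⟩
      have hinner : ⟪i.1, m⟫ = (1/2) * ⟪i.1, x₀⟫ + (1/2) * ⟪i.1, xj⟫ := by
        simp [hm, inner_add_right, real_inner_smul_right]
      rcases Finset.mem_insert.1 hi with rfl | hit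
      · have h1 := hHP x₀ hx₀H i (hsub (Finset.mem_insert_self _ _))
        rw [hinner]; linarith
      · have h1 := hx₀ i hit hex
        have h2 := hHP xj hxjH i (hsub (Finset.mem_insert_of_mem hit))
        rw [hinner]; linarith
    · exact ⟨x₀, hx₀H, fun i hi hex => by
        rcases Finset.mem_insert.1 hi with rfl | hit
        · exact absurd hex hslack
        · exact hx₀ i hit hex⟩

/-- Step lemma: one can move from `x₀` in direction `y` while staying in the polyhedron,
provided `y` has nonpositive inner product with all constraints tight at `x₀`. -/
theorem exists_pos_step {s : Finset (V × ℝ)} {x₀ y : V}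
    (h1 : ∀ j ∈ s, ⟪j.1, x₀⟫ ≤ j.2)
    (h2 : ∀ j ∈ s, ⟪j.1, x₀⟫ = j.2 → ⟪j.1, y⟫ ≤ 0) :
    ∃ t : ℝ, 0 < t ∧ ∀ j ∈ s, ⟪j.1, x₀ + t • y⟫ ≤ j.2 := by
  have hev : ∀ j ∈ s, ∀ᶠ t in nhdsWithin (0:ℝ) (Set.Ioi 0), ⟪j.1, x₀ + t • y⟫ ≤ j.2 := by
    intro j hj
    have hinner : ∀ t : ℝ, ⟪j.1, x₀ + t • y⟫ = ⟪j.1, x₀⟫ + t * ⟪j.1, y⟫ := fun t => by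
      simp [inner_add_right, real_inner_smul_right]
    by_cases hy : ⟪j.1, y⟫ ≤ 0
    · filter_upwards [self_mem_nhdsWithin] with t ht
      rw [hinner]
      have : t * ⟪j.1, y⟫ ≤ 0 := mul_nonpos_iff.2 (Or.inl ⟨le_of_lt (Set.mem_Ioi.1 ht), hy⟩)
      have := h1 j hj
      linarith
    · push_neg at hy
      have hlt : ⟪j.1, x₀⟫ < j.2 :=
        lt_of_le_of_ne (h1 j hj) (fun heq => absurd (h2 j hj heq) (not_le.2 hy))
      have htend : Filter.Tendsto (fun t : ℝ => ⟪j.1, x₀⟫ + t * ⟪j.1, y⟫)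
          (nhdsWithin (0:ℝ) (Set.Ioi 0)) (nhds (⟪j.1, x₀⟫ + 0 * ⟪j.1, y⟫)) :=
        ((continuous_const.add (continuous_id.mul continuous_const)).tendsto 0).mono_left
          nhdsWithin_le_nhds
      have := htend.eventually_lt_const (by simpa using hlt)
      filter_upwards [this] with t ht
      rw [hinner]; exact ht.le
  have hall : ∀ᶠ t in nhdsWithin (0:ℝ) (Set.Ioi 0), ∀ j ∈ s, ⟪j.1, x₀ + t • y⟫ ≤ j.2 :=
    (Filter.eventually_all_finset s).2 hev
  obtain ⟨t, ht, htpos⟩ := (hall.and self_mem_nhdsWithin).exists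
  exact ⟨t, htpos, ht⟩

variable {V : Type*} [NormedAddCommGroup V] [InnerProductSpace ℝ V] [FiniteDimensional ℝ V]

/-- A face of a polyhedron is the subset of the polyhedron where all constraints active
on the face are tight. -/
theorem face_eq_tight {s I : Finset (V × ℝ)} {P H : Set V}
    (hP : P = {x | ∀ j ∈ s, ⟪j.1, x⟫ ≤ j.2})
    (hI : ∀ j, j ∈ I ↔ (j ∈ s ∧ ∀ x ∈ H, ⟪j.1, x⟫ = j.2))
    (hHne : H.Nonempty) (hHconv : Convex ℝ H) (hext : IsExtreme ℝ P H) :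
    H = {z | z ∈ P ∧ ∀ j ∈ I, ⟪j.1, z⟫ = j.2} := by
  have hHP : ∀ x ∈ H, ∀ j ∈ s, ⟪j.1, x⟫ ≤ j.2 := fun x hx => by
    have := hext.1 hx; rw [hP] at this; exact this
  obtain ⟨x₀, hx₀H, hx₀⟩ := exists_slack_point hHne hHconv hHP
  apply Set.Subset.antisymm
  · exact fun z hz => ⟨hext.1 hz, fun j hj => ((hI j).1 hj).2 z hz⟩
  · rintro z ⟨hzP, hztight⟩
    -- key: every constraint tight at x₀ is in I, hence tight at z as well
    have h2 : ∀ j ∈ s, ⟪j.1, x₀⟫ = j.2 → ⟪j.1, x₀ - z⟫ ≤ 0 := by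
      intro j hj htight
      have hjI : j ∈ I := by
        rw [hI]
        refine ⟨hj, fun x hx => ?_⟩
        by_contra hne
        have := hx₀ j hj ⟨x, hx, lt_of_le_of_ne (hHP x hx j hj) hne⟩
        linarith
      have := hztight j hjI
      rw [inner_sub_right]
      linarith
    obtain ⟨t, htpos, ht⟩ := exists_pos_step (fun j hj => hHP x₀ hx₀H j hj) h2
    set w : V := x₀ + t • (x₀ - z) with hw
    have hwP : w ∈ P := by rw [hP]; exact ht
    have hseg : x₀ ∈ openSegment ℝ z w := by
      refine ⟨t/(1+t), 1/(1+t), by positivity, by positivity, ?_, ?_⟩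
      · field_simp; ring
      · have key : (t : ℝ) • z + (x₀ + t • (x₀ - z)) = (1+t) • x₀ := by module
        have h1t : (1:ℝ) + t ≠ 0 := by positivity
        rw [hw, div_eq_mul_inv, one_div, mul_comm, mul_smul]
        rw [← smul_add, key, smul_smul, inv_mul_cancel₀ h1t, one_smul]
    exact hext.2 hzP hwP hx₀H hseg

/-- The normal cone at a face equals the cone generated by the active constraint normals. -/
theorem normalCone_eq_fcone {s I : Finset (V × ℝ)} {P H : Set V}
    (hP : P = {x | ∀ j ∈ s, ⟪j.1, x⟫ ≤ j.2})
    (hI : ∀ j, j ∈ I ↔ (j ∈ s ∧ ∀ x ∈ H, ⟪j.1, x⟫ = j.2))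
    (hHne : H.Nonempty) (hHconv : Convex ℝ H) (hext : IsExtreme ℝ P H) :
    {u : V | ∀ f ∈ H, ∀ z ∈ P, ⟪u, z - f⟫ ≤ 0} = fcone I Prod.fst := by
  have hHP : ∀ x ∈ H, ∀ j ∈ s, ⟪j.1, x⟫ ≤ j.2 := fun x hx => by
    have := hext.1 hx; rw [hP] at this; exact this
  obtain ⟨x₀, hx₀H, hx₀⟩ := exists_slack_point hHne hHconv hHP
  apply Set.Subset.antisymm
  · -- u ∈ N(P,H) → u ∈ cone
    intro u hu
    by_contra hnot
    obtain ⟨y, hy, hxy⟩ := exists_dual_of_not_mem_fcone hnot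
    have h2 : ∀ j ∈ s, ⟪j.1, x₀⟫ = j.2 → ⟪j.1, y⟫ ≤ 0 := by
      intro j hj htight
      refine hy j ((hI j).2 ⟨hj, fun x hx => ?_⟩)
      by_contra hne
      have := hx₀ j hj ⟨x, hx, lt_of_le_of_ne (hHP x hx j hj) hne⟩
      linarith
    obtain ⟨t, htpos, ht⟩ := exists_pos_step (fun j hj => hHP x₀ hx₀H j hj) h2
    have hzP : x₀ + t • y ∈ P := by rw [hP]; exact ht
    have := hu x₀ hx₀H _ hzP
    rw [add_sub_cancel_left, real_inner_smul_right] at this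
    nlinarith
  · -- cone ⊆ N(P,H)
    rintro u ⟨lam, hlam, rfl⟩ f hf z hz
    rw [sum_inner]
    refine Finset.sum_nonpos fun j hj => ?_
    rw [real_inner_smul_left, inner_sub_right]
    have h1 : ⟪j.1, z⟫ ≤ j.2 := by rw [hP] at hz; exact hz j ((hI j).1 hj).1
    have h2 : ⟪j.1, f⟫ = j.2 := ((hI j).1 hj).2 f hf
    have := hlam j hj
    nlinarith

variable {V : Type*} [NormedAddCommGroup V] [InnerProductSpace ℝ V] [FiniteDimensional ℝ V]
variable {ι : Type*}

/-- A positive combination of the generators is in the intrinsic interior of the cone. -/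
theorem aux_arith {C m : ℝ} (hC0 : 0 ≤ C) (hm0 : 0 < m) : C * (m / (C + 1)) < m := by
  rw [← mul_div_assoc, div_lt_iff₀ (by linarith)]
  nlinarith

theorem pos_rep_mem_relint {I : Finset (V × ℝ)} {u : V} (mu : (V × ℝ) → ℝ)
    (hpos : ∀ j ∈ I, 0 < mu j) (hsum : u = ∑ j ∈ I, mu j • j.1) :
    u ∈ intrinsicInterior ℝ (fcone I Prod.fst) := by
  classical
  by_cases hIe : I = ∅
  · subst hIe
    have hzero : fcone (∅ : Finset (V × ℝ)) Prod.fst = {(0 : V)} := by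
      ext x
      constructor
      · rintro ⟨lam, _, rfl⟩; simp
      · rintro rfl; exact zero_mem_fcone _ _
    rw [hzero, intrinsicInterior_singleton]
    simp only [Finset.sum_empty] at hsum
    simp [hsum]
  · have hIne : I.Nonempty := Finset.nonempty_iff_ne_empty.2 hIe
    set T : ({j // j ∈ I} → ℝ) →ₗ[ℝ] V :=
      { toFun := fun g => ∑ i, g i • (i : V × ℝ).1
        map_add' := fun g g' => by simp [add_smul, Finset.sum_add_distrib]
        map_smul' := fun c g => by simp [smul_smul, Finset.smul_sum] } with hT
    have hTapp : ∀ g : {j // j ∈ I} → ℝ, T g = ∑ i : {j // j ∈ I}, g i • (i : V × ℝ).1 :=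
      fun g => rfl
    set M := LinearMap.range T with hM
    have hTmem : ∀ g : {j // j ∈ I} → ℝ, (∀ i, 0 ≤ g i) → T g ∈ fcone I Prod.fst := by
      intro g hg
      refine ⟨fun j => if h : j ∈ I then g ⟨j, h⟩ else 0,
        fun i hi => by simp only [hi, dif_pos]; exact hg _, ?_⟩
      rw [hTapp, ← Finset.sum_coe_sort I]
      exact Finset.sum_congr rfl fun i _ => by simp
    have hcone_sub : fcone I Prod.fst ⊆ (M : Set V) := by
      rintro x ⟨lam, _, rfl⟩
      exact ⟨fun i => lam i, by rw [hTapp, Finset.sum_coe_sort I (fun j => lam j • j.1)]⟩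
    have hspan : (affineSpan ℝ (fcone I Prod.fst) : Set V) ⊆ (M : Set V) := by
      intro x hx
      have hle : affineSpan ℝ (fcone I Prod.fst) ≤ M.toAffineSubspace :=
        affineSpan_le.2 (fun y hy => (Submodule.mem_toAffineSubspace).2 (hcone_sub hy))
      exact (Submodule.mem_toAffineSubspace).1 (hle hx)
    obtain ⟨σ, hσ⟩ := T.rangeRestrict.exists_rightInverse_of_surjective
      (LinearMap.range_eq_top.2 T.surjective_rangeRestrict)
    set K := LinearMap.toContinuousLinearMap σ with hK
    set C := ‖K‖ with hC
    have hC0 : 0 ≤ C := hC ▸ norm_nonneg K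
    have hKbound : ∀ x : M, ∀ i, |σ x i| ≤ C * ‖x‖ := by
      intro x i
      calc |σ x i| = ‖(σ x) i‖ := rfl
        _ ≤ ‖σ x‖ := norm_le_pi_norm (σ x) i
        _ = ‖K x‖ := rfl
        _ ≤ C * ‖x‖ := K.le_opNorm x
    obtain ⟨jm, hjm, hmin⟩ := I.exists_min_image mu hIne
    set m := mu jm with hm
    have hm0 : 0 < m := hpos jm hjm
    set ε := m / (C + 1) with hε
    have hε0 : 0 < ε := by positivity
    have huI : u ∈ fcone I Prod.fst := ⟨mu, fun j hj => (hpos j hj).le, hsum⟩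
    rw [mem_intrinsicInterior_iff_ball]
    refine ⟨subset_affineSpan ℝ _ huI, ε, hε0, ?_⟩
    intro z hz hdist
    have hzM : z ∈ M := hspan hz
    have huM : u ∈ M := hcone_sub huI
    have hhM : z - u ∈ M := M.sub_mem hzM huM
    set h : M := ⟨z - u, hhM⟩ with hh
    have hTg : T (σ h) = z - u := by
      have := LinearMap.ext_iff.1 hσ h
      have h2 : T.rangeRestrict (σ h) = h := this
      have h3 := congrArg (Subtype.val) h2
      simpa using h3
    have hgb : ∀ i, |σ h i| < m := by
      intro i
      have hb := hKbound h i
      have hnorm : ‖h‖ = dist z u := by rw [hh]; simp [dist_eq_norm]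
      have h1 : ‖h‖ < ε := by rw [hnorm]; exact hdist
      have h2 : C * ‖h‖ ≤ C * ε := mul_le_mul_of_nonneg_left h1.le hC0
      have hCε : C * ε < m := hε ▸ aux_arith hC0 hm0
      exact lt_of_le_of_lt (hb.trans h2) hCε
    have huT : T (fun i => mu i) = u := by
      rw [hTapp, Finset.sum_coe_sort I (fun j => mu j • j.1)]; exact hsum.symm
    have hzT : T (fun i => mu i + σ h i) = z := by
      have : (fun i : {j // j ∈ I} => mu i + σ h i) = (fun i : {j // j ∈ I} => mu i) + σ h := rfl
      rw [this, map_add, huT, hTg]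
      abel
    rw [← hzT]
    refine hTmem _ fun i => ?_
    have h1 : m ≤ mu i := hmin i i.2
    have h2 := hgb i
    have := abs_lt.1 h2
    linarith

variable {V : Type*} [NormedAddCommGroup V] [InnerProductSpace ℝ V] [FiniteDimensional ℝ V]
variable {ι : Type*}

/-- Using the "star" property, the negative of any generator lies in the cone generated by all
generators together with the negatives of the generators in the support of `lam`. -/
theorem exists_cancel_rep {I : Finset (V × ℝ)} {lam : (V × ℝ) → ℝ}
    (star : ∀ y : V, (∀ j ∈ I, lam j ≠ 0 → ⟪j.1, y⟫ = 0) → (∀ j ∈ I, ⟪j.1, y⟫ ≤ 0) →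
      ∀ j ∈ I, ⟪j.1, y⟫ = 0)
    {j₀ : V × ℝ} (hj₀ : j₀ ∈ I) :
    ∃ γ δ : (V × ℝ) → ℝ, (∀ j ∈ I, 0 ≤ γ j) ∧ (∀ j ∈ I, 0 ≤ δ j) ∧
      (∀ j ∈ I, lam j = 0 → δ j = 0) ∧ (j₀.1 : V) + ∑ j ∈ I, (γ j - δ j) • j.1 = 0 := by
  classical
  set t' : Finset ((V × ℝ) × Bool) :=
    I ×ˢ ({false} : Finset Bool) ∪ (I.filter fun j => lam j ≠ 0) ×ˢ ({true} : Finset Bool)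
    with ht'
  set v' : (V × ℝ) × Bool → V := fun p => if p.2 then -p.1.1 else p.1.1 with hv'
  have hmem : -j₀.1 ∈ fcone t' v' := by
    by_contra hnot
    obtain ⟨y, hy, hxy⟩ := exists_dual_of_not_mem_fcone hnot
    have hle : ∀ j ∈ I, ⟪j.1, y⟫ ≤ 0 := by
      intro j hj
      have := hy (j, false) (Finset.mem_union_left _ (Finset.mem_product.2 ⟨hj, by simp⟩))
      simpa [hv'] using this
    have hzero : ∀ j ∈ I, lam j ≠ 0 → ⟪j.1, y⟫ = 0 := by
      intro j hj hne
      refine le_antisymm (hle j hj) ?_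
      have := hy (j, true) (Finset.mem_union_right _
        (Finset.mem_product.2 ⟨Finset.mem_filter.2 ⟨hj, hne⟩, by simp⟩))
      simp only [hv', if_true, inner_neg_left] at this
      linarith
    have h0 := star y hzero hle j₀ hj₀
    rw [inner_neg_left, h0] at hxy
    linarith
  obtain ⟨ν, hν, hsum⟩ := hmem
  have hdisj : Disjoint (I ×ˢ ({false} : Finset Bool))
      ((I.filter fun j => lam j ≠ 0) ×ˢ ({true} : Finset Bool)) := by
    rw [Finset.disjoint_left]
    rintro ⟨j, b⟩ h1 h2
    have hb1 := (Finset.mem_product.1 h1).2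
    have hb2 := (Finset.mem_product.1 h2).2
    simp at hb1 hb2
    rw [hb1] at hb2; exact Bool.false_ne_true hb2
  rw [ht', Finset.sum_union hdisj, Finset.sum_product, Finset.sum_product] at hsum
  simp only [Finset.sum_singleton] at hsum
  refine ⟨fun j => ν (j, false), fun j => if lam j = 0 then 0 else ν (j, true),
    ?_, ?_, ?_, ?_⟩
  · intro j hj
    exact hν (j, false) (Finset.mem_union_left _ (Finset.mem_product.2 ⟨hj, by simp⟩))
  · intro j hj
    by_cases h : lam j = 0
    · simp [h]
    · simp only [h, if_neg, if_false]
      exact hν (j, true) (Finset.mem_union_right _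
        (Finset.mem_product.2 ⟨Finset.mem_filter.2 ⟨hj, h⟩, by simp⟩))
  · intro j hj h; simp [h]
  · have hright : ∑ j ∈ I.filter (fun j => lam j ≠ 0), ν (j, true) • v' (j, true)
        = ∑ j ∈ I, (if lam j = 0 then 0 else ν (j, true)) • (-j.1) := by
      rw [Finset.sum_filter]
      refine Finset.sum_congr rfl fun j hj => ?_
      by_cases h : lam j = 0 <;> simp [h, hv']
    rw [hright] at hsum
    have hleft : ∑ j ∈ I, ν (j, false) • v' (j, false) = ∑ j ∈ I, ν (j, false) • j.1 := by
      refine Finset.sum_congr rfl fun j hj => by simp [hv']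
    rw [hleft] at hsum
    have : ∑ j ∈ I, ((fun j => ν (j, false)) j - (fun j => if lam j = 0 then 0 else ν (j, true)) j) • j.1
        = ∑ j ∈ I, ν (j, false) • j.1 - ∑ j ∈ I, (if lam j = 0 then 0 else ν (j, true)) • j.1 := by
      rw [← Finset.sum_sub_distrib]
      exact Finset.sum_congr rfl fun j hj => by rw [sub_smul]
    rw [this]
    have hneg : ∑ j ∈ I, (if lam j = 0 then 0 else ν (j, true)) • (-j.1)
        = -∑ j ∈ I, (if lam j = 0 then 0 else ν (j, true)) • j.1 := by
      rw [← Finset.sum_neg_distrib]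
      exact Finset.sum_congr rfl fun j hj => by rw [smul_neg]
    rw [hneg] at hsum
    have := hsum
    abel_nf
    abel_nf at this
    linear_combination (norm := abel1) -this

/-- From a nonnegative representation one can obtain a strictly positive representation,
given the "star" property for every representation. -/
theorem exists_pos_rep {I : Finset (V × ℝ)} {u : V}
    (hstar : ∀ lam : (V × ℝ) → ℝ, u = ∑ j ∈ I, lam j • j.1 →
      ∀ y : V, (∀ j ∈ I, lam j ≠ 0 → ⟪j.1, y⟫ = 0) → (∀ j ∈ I, ⟪j.1, y⟫ ≤ 0) →
      ∀ j ∈ I, ⟪j.1, y⟫ = 0)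
    (lam : (V × ℝ) → ℝ) (hlam : ∀ j ∈ I, 0 ≤ lam j) (hsum : u = ∑ j ∈ I, lam j • j.1) :
    ∃ mu : (V × ℝ) → ℝ, (∀ j ∈ I, 0 < mu j) ∧ u = ∑ j ∈ I, mu j • j.1 := by
  classical
  suffices h : ∀ n : ℕ, ∀ lam : (V × ℝ) → ℝ, (I.filter fun j => lam j = 0).card ≤ n →
      (∀ j ∈ I, 0 ≤ lam j) → u = ∑ j ∈ I, lam j • j.1 →
      ∃ mu : (V × ℝ) → ℝ, (∀ j ∈ I, 0 < mu j) ∧ u = ∑ j ∈ I, mu j • j.1 by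
    exact h _ lam le_rfl hlam hsum
  intro n
  induction n with
  | zero =>
    intro lam hcard hlam hsum
    have hempty : (I.filter fun j => lam j = 0) = ∅ := Finset.card_eq_zero.1 (le_antisymm hcard (Nat.zero_le _))
    refine ⟨lam, fun j hj => ?_, hsum⟩
    rcases eq_or_lt_of_le (hlam j hj) with h | h
    · exfalso
      have : j ∈ I.filter fun j => lam j = 0 := Finset.mem_filter.2 ⟨hj, h.symm⟩
      rw [hempty] at this; exact absurd this (Finset.notMem_empty j)
    · exact h
  | succ n IH =>
    intro lam hcard hlam hsum
    by_cases hz : (I.filter fun j => lam j = 0).Nonempty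
    · obtain ⟨j₀, hj₀f⟩ := hz
      obtain ⟨hj₀I, hj₀z⟩ := Finset.mem_filter.1 hj₀f
      obtain ⟨γ, δ, hγ, hδ, hδz, hcancel⟩ := exists_cancel_rep (hstar lam hsum) hj₀I
      set B : (V × ℝ) → ℝ := fun j => (if j = j₀ then 1 else 0) + (γ j - δ j) with hB
      -- choose θ
      have hθ : ∃ θ : ℝ, 0 < θ ∧ ∀ j ∈ I, lam j ≠ 0 → θ * |B j| < lam j := by
        have hev : ∀ j ∈ I, ∀ᶠ θ in nhdsWithin (0:ℝ) (Set.Ioi 0),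
            (lam j ≠ 0 → θ * |B j| < lam j) := by
          intro j hj
          by_cases h : lam j = 0
          · filter_upwards with θ; intro hne; exact absurd h hne
          · have hpos : 0 < lam j := lt_of_le_of_ne (hlam j hj) (Ne.symm h)
            have htend : Filter.Tendsto (fun θ : ℝ => θ * |B j|)
                (nhdsWithin (0:ℝ) (Set.Ioi 0)) (nhds (0 * |B j|)) :=
              ((continuous_id.mul continuous_const).tendsto 0).mono_left nhdsWithin_le_nhds
            filter_upwards [htend.eventually_lt_const (by simpa using hpos)] with θ hθ _
            exact hθ
        obtain ⟨θ, hθ1, hθ2⟩ := ((Filter.eventually_all_finset I).2 hev |>.and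
          self_mem_nhdsWithin).exists
        exact ⟨θ, hθ2, hθ1⟩
      obtain ⟨θ, hθ0, hθb⟩ := hθ
      set lam' : (V × ℝ) → ℝ := fun j => lam j + θ * B j with hlam'
      have hlam'app : ∀ j, lam' j = lam j + θ * B j := fun j => rfl
      have hBapp : ∀ j, B j = (if j = j₀ then 1 else 0) + (γ j - δ j) := fun j => rfl
      have hBsum : ∑ j ∈ I, B j • j.1 = 0 := by
        have h1 : ∑ j ∈ I, B j • j.1
            = ∑ j ∈ I, (if j = j₀ then 1 else 0 : ℝ) • j.1 + ∑ j ∈ I, (γ j - δ j) • j.1 := by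
          rw [← Finset.sum_add_distrib]
          exact Finset.sum_congr rfl fun j hj => by rw [hB]; rw [add_smul]
        rw [h1]
        have h2 : ∑ j ∈ I, (if j = j₀ then 1 else 0 : ℝ) • j.1 = j₀.1 := by
          rw [Finset.sum_eq_single j₀ (fun j _ hne => by simp [hne]) (fun h => absurd hj₀I h)]
          simp
        rw [h2]
        exact hcancel
      have hsum' : u = ∑ j ∈ I, lam' j • j.1 := by
        have : ∑ j ∈ I, lam' j • j.1 = ∑ j ∈ I, lam j • j.1 + θ • ∑ j ∈ I, B j • j.1 := by
          rw [Finset.smul_sum, ← Finset.sum_add_distrib]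
          refine Finset.sum_congr rfl fun j hj => ?_
          rw [hlam'app j]
          module
        rw [this, hBsum, smul_zero, add_zero, hsum]
      have hlam'nn : ∀ j ∈ I, 0 ≤ lam' j := by
        intro j hj
        by_cases h : lam j = 0
        · have hδ0 := hδz j hj h
          have hγ0 := hγ j hj
          have hBnn : 0 ≤ B j := by
            have hite : (0:ℝ) ≤ if j = j₀ then 1 else 0 := by split <;> norm_num
            rw [hBapp j, hδ0]
            linarith [hγ0, hite]
          rw [hlam'app j, h]
          positivity
        · have := hθb j hj h
          have habs : -(θ * |B j|) ≤ θ * B j := by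
            rw [← mul_neg]
            exact mul_le_mul_of_nonneg_left (neg_abs_le (B j)) hθ0.le
          rw [hlam'app j]
          linarith
      have hlam'j₀ : 0 < lam' j₀ := by
        have hδ0 := hδz j₀ hj₀I hj₀z
        have hγ0 := hγ j₀ hj₀I
        rw [hlam'app j₀, hj₀z, hBapp j₀, hδ0]
        rw [if_pos rfl]
        nlinarith
      have hcard' : (I.filter fun j => lam' j = 0).card ≤ n := by
        have hsub : (I.filter fun j => lam' j = 0) ⊆ (I.filter fun j => lam j = 0).erase j₀ := by
          intro j hjf
          obtain ⟨hjI, hjz⟩ := Finset.mem_filter.1 hjf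
          refine Finset.mem_erase.2 ⟨?_, Finset.mem_filter.2 ⟨hjI, ?_⟩⟩
          · rintro rfl; rw [hjz] at hlam'j₀; exact lt_irrefl 0 hlam'j₀
          · by_contra h
            have h1 := hθb j hjI h
            have h2 : lam' j > 0 := by
              have habs : -(θ * |B j|) ≤ θ * B j := by
                rw [← mul_neg]
                exact mul_le_mul_of_nonneg_left (neg_abs_le (B j)) hθ0.le
              rw [hlam'app j]
              linarith
            rw [hjz] at h2; exact lt_irrefl 0 h2
        calc (I.filter fun j => lam' j = 0).card
            ≤ ((I.filter fun j => lam j = 0).erase j₀).card := Finset.card_le_card hsub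
          _ = (I.filter fun j => lam j = 0).card - 1 := Finset.card_erase_of_mem hj₀f
          _ ≤ n := by omega
      exact IH lam' hcard' hlam'nn hsum'
    · rw [Finset.not_nonempty_iff_eq_empty] at hz
      refine ⟨lam, fun j hj => ?_, hsum⟩
      rcases eq_or_lt_of_le (hlam j hj) with h | h
      · exfalso
        have : j ∈ I.filter fun j => lam j = 0 := Finset.mem_filter.2 ⟨hj, h.symm⟩
        rw [hz] at this; exact absurd this (Finset.notMem_empty j)
      · exact h

variable {V : Type*} [NormedAddCommGroup V] [InnerProductSpace ℝ V] [FiniteDimensional ℝ V]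
variable {ι : Type*}

/-- Forward direction: a relative interior point of the normal cone at `H` has `H` as its
set of maximizers. -/
theorem maxSet_eq_of_mem_relint {s I : Finset (V × ℝ)} {P H : Set V} {u : V}
    (hP : P = {x | ∀ j ∈ s, ⟪j.1, x⟫ ≤ j.2})
    (hI : ∀ j, j ∈ I ↔ (j ∈ s ∧ ∀ x ∈ H, ⟪j.1, x⟫ = j.2))
    (hHne : H.Nonempty) (hHconv : Convex ℝ H) (hext : IsExtreme ℝ P H)
    (hu : u ∈ intrinsicInterior ℝ {w : V | ∀ f ∈ H, ∀ z ∈ P, ⟪w, z - f⟫ ≤ 0}) :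
    {z | z ∈ P ∧ ∀ w ∈ P, ⟪u, w⟫ ≤ ⟪u, z⟫} = H := by
  set N : Set V := {w : V | ∀ f ∈ H, ∀ z ∈ P, ⟪w, z - f⟫ ≤ 0} with hN
  have huN : u ∈ N := intrinsicInterior_subset hu
  have hHP : ∀ x ∈ H, ∀ j ∈ s, ⟪j.1, x⟫ ≤ j.2 := fun x hx => by
    have := hext.1 hx; rw [hP] at this; exact this
  obtain ⟨x₀, hx₀H, hx₀⟩ := exists_slack_point hHne hHconv hHP
  have hHsub : ∀ f ∈ H, f ∈ P ∧ ∀ w ∈ P, ⟪u, w⟫ ≤ ⟪u, f⟫ := by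
    intro f hf
    refine ⟨hext.1 hf, fun w hw => ?_⟩
    have := huN f hf w hw
    rw [inner_sub_right] at this
    linarith
  apply Set.Subset.antisymm
  · rintro z ⟨hzP, hzmax⟩
    -- the inner product of z - x₀ with every element of N vanishes
    have hvanish : ∀ v ∈ N, 0 ≤ ⟪v, z - x₀⟫ := by
      obtain ⟨huspan, ε, hε0, hball⟩ := mem_intrinsicInterior_iff_ball.1 hu
      intro v hv
      set δ : ℝ := ε / (2 * (‖u - v‖ + 1)) with hδ
      have hδ0 : 0 < δ := by positivity
      set u' : V := u + δ • (u - v) with hu'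
      have hu'span : u' ∈ affineSpan ℝ N := by
        have hm := (affineSpan ℝ N).smul_vsub_vadd_mem δ
          (subset_affineSpan ℝ N huN) (subset_affineSpan ℝ N hv) (subset_affineSpan ℝ N huN)
        have he : δ • (u -ᵥ v) +ᵥ u = u' := by
          rw [hu', vsub_eq_sub, vadd_eq_add]; module
        rwa [he] at hm
      have hdist : dist u' u < ε := by
        have h1 : dist u' u = δ * ‖u - v‖ := by
          rw [hu', dist_eq_norm, add_sub_cancel_left, norm_smul, Real.norm_eq_abs,
            abs_of_pos hδ0]
        rw [h1, hδ]
        rw [div_mul_eq_mul_div, div_lt_iff₀ (by positivity)]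
        nlinarith [norm_nonneg (u - v)]
      have hu'N : u' ∈ N := hball u' hu'span hdist
      have h1 := hu'N x₀ hx₀H z hzP
      have hu0 : ⟪u, z - x₀⟫ = 0 := by
        rw [inner_sub_right]
        have ha := hzmax x₀ (hext.1 hx₀H)
        have hb := (hHsub x₀ hx₀H).2 z hzP
        linarith
      rw [hu', inner_add_left, real_inner_smul_left, inner_sub_left, hu0] at h1
      nlinarith
    -- apply with the sum of all active normals
    set v₀ : V := ∑ j ∈ I, j.1 with hv₀
    have hv₀N : v₀ ∈ N := by
      rw [hN, normalCone_eq_fcone hP hI hHne hHconv hext]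
      exact ⟨fun _ => 1, fun i _ => zero_le_one, by simp [hv₀]⟩
    have hsum0 := hvanish v₀ hv₀N
    have hterms : ∀ j ∈ I, ⟪j.1, z - x₀⟫ ≤ 0 := by
      intro j hj
      rw [inner_sub_right]
      have h1 : ⟪j.1, z⟫ ≤ j.2 := by rw [hP] at hzP; exact hzP j ((hI j).1 hj).1
      have h2 : ⟪j.1, x₀⟫ = j.2 := ((hI j).1 hj).2 x₀ hx₀H
      linarith
    have hsumin : ⟪v₀, z - x₀⟫ = ∑ j ∈ I, ⟪j.1, z - x₀⟫ := by rw [hv₀, sum_inner]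
    have hall0 : ∀ j ∈ I, ⟪j.1, z - x₀⟫ = 0 := by
      rw [hsumin] at hsum0
      have := Finset.sum_eq_zero_iff_of_nonpos hterms
      have hs0 : ∑ j ∈ I, ⟪j.1, z - x₀⟫ = 0 :=
        le_antisymm (Finset.sum_nonpos hterms) hsum0
      exact this.1 hs0
    rw [face_eq_tight hP hI hHne hHconv hext]
    refine ⟨hzP, fun j hj => ?_⟩
    have h1 := hall0 j hj
    rw [inner_sub_right] at h1
    have h2 : ⟪j.1, x₀⟫ = j.2 := ((hI j).1 hj).2 x₀ hx₀H
    linarith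
  · intro f hf
    exact hHsub f hf

/-- Backward direction: if `H` is exactly the maximizer set of `u`, then `u` is in the relative
interior of the normal cone at `H`. -/
theorem mem_relint_of_maxSet_eq {s I : Finset (V × ℝ)} {P H : Set V} {u : V}
    (hP : P = {x | ∀ j ∈ s, ⟪j.1, x⟫ ≤ j.2})
    (hI : ∀ j, j ∈ I ↔ (j ∈ s ∧ ∀ x ∈ H, ⟪j.1, x⟫ = j.2))
    (hHne : H.Nonempty) (hHconv : Convex ℝ H) (hext : IsExtreme ℝ P H)
    (hmax : {z | z ∈ P ∧ ∀ w ∈ P, ⟪u, w⟫ ≤ ⟪u, z⟫} = H) :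
    u ∈ intrinsicInterior ℝ {w : V | ∀ f ∈ H, ∀ z ∈ P, ⟪w, z - f⟫ ≤ 0} := by
  have hNC := normalCone_eq_fcone hP hI hHne hHconv hext
  have hHP : ∀ x ∈ H, ∀ j ∈ s, ⟪j.1, x⟫ ≤ j.2 := fun x hx => by
    have := hext.1 hx; rw [hP] at this; exact this
  obtain ⟨x₀, hx₀H, hx₀⟩ := exists_slack_point hHne hHconv hHP
  have huN : u ∈ {w : V | ∀ f ∈ H, ∀ z ∈ P, ⟪w, z - f⟫ ≤ 0} := by
    intro f hf z hz
    rw [← hmax] at hf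
    rw [inner_sub_right]
    have := hf.2 z hz
    linarith
  rw [hNC] at huN
  obtain ⟨lam0, hlam0, hsum0⟩ := huN
  have hstar : ∀ lam : (V × ℝ) → ℝ, u = ∑ j ∈ I, lam j • j.1 →
      ∀ y : V, (∀ j ∈ I, lam j ≠ 0 → ⟪j.1, y⟫ = 0) → (∀ j ∈ I, ⟪j.1, y⟫ ≤ 0) →
      ∀ j ∈ I, ⟪j.1, y⟫ = 0 := by
    intro lam hsum y hsupp hle
    have h2 : ∀ j ∈ s, ⟪j.1, x₀⟫ = j.2 → ⟪j.1, y⟫ ≤ 0 := by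
      intro j hj htight
      refine hle j ((hI j).2 ⟨hj, fun x hx => ?_⟩)
      by_contra hne
      have := hx₀ j hj ⟨x, hx, lt_of_le_of_ne (hHP x hx j hj) hne⟩
      linarith
    obtain ⟨t, htpos, ht⟩ := exists_pos_step (fun j hj => hHP x₀ hx₀H j hj) h2
    set z : V := x₀ + t • y with hz
    have hzP : z ∈ P := by rw [hP]; exact ht
    have huy : ⟪u, y⟫ = 0 := by
      rw [hsum, sum_inner]
      refine Finset.sum_eq_zero fun j hj => ?_
      rw [real_inner_smul_left]
      by_cases h : lam j = 0
      · rw [h, zero_mul]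
      · rw [hsupp j hj h, mul_zero]
    have hzH : z ∈ H := by
      rw [← hmax]
      refine ⟨hzP, fun w hw => ?_⟩
      have hx₀max : ∀ w ∈ P, ⟪u, w⟫ ≤ ⟪u, x₀⟫ := by
        have : x₀ ∈ {z | z ∈ P ∧ ∀ w ∈ P, ⟪u, w⟫ ≤ ⟪u, z⟫} := by rw [hmax]; exact hx₀H
        exact this.2
      have huz : ⟪u, z⟫ = ⟪u, x₀⟫ := by
        rw [hz, inner_add_right, real_inner_smul_right, huy, mul_zero, add_zero]
      rw [huz]
      exact hx₀max w hw
    intro j hj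
    have htight_z : ⟪j.1, z⟫ = j.2 := ((hI j).1 hj).2 z hzH
    have htight_x₀ : ⟪j.1, x₀⟫ = j.2 := ((hI j).1 hj).2 x₀ hx₀H
    rw [hz, inner_add_right, real_inner_smul_right, htight_x₀] at htight_z
    have : t * ⟪j.1, y⟫ = 0 := by linarith
    rcases mul_eq_zero.1 this with h | h
    · exact absurd h (ne_of_gt htpos)
    · exact h
  obtain ⟨mu, hmu, hmusum⟩ := exists_pos_rep hstar lam0 hlam0 hsum0
  rw [hNC]
  exact pos_rep_mem_relint mu hmu hmusum

end Cone

theorem normalCone_eq_disjoint_union_relint {d : ℕ} (P F : Set (Euc d))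
    (hP : IsPolyhedral P) (hne : P.Nonempty) (hF : IsFaceOf P F) :
    (normalCone P F =
      ⋃ H ∈ {H : Set (Euc d) | IsFaceOf P H ∧ F ⊆ H},
        intrinsicInterior ℝ (normalCone P H)) ∧
    (∀ H₁ H₂ : Set (Euc d), IsFaceOf P H₁ → F ⊆ H₁ → IsFaceOf P H₂ → F ⊆ H₂ →
      H₁ ≠ H₂ →
      Disjoint (intrinsicInterior ℝ (normalCone P H₁))
        (intrinsicInterior ℝ (normalCone P H₂))) := by
  classical
  obtain ⟨s, hPs⟩ := hP
  obtain ⟨hFne, hFconv, hFext⟩ := hF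
  -- the active-constraint set of a face
  set Ix : Set (Euc d) → Finset (Euc d × ℝ) :=
    fun H => s.filter (fun j => ∀ x ∈ H, ⟪j.1, x⟫ = j.2) with hIx
  have hIx_spec : ∀ H : Set (Euc d), ∀ j, j ∈ Ix H ↔ (j ∈ s ∧ ∀ x ∈ H, ⟪j.1, x⟫ = j.2) :=
    fun H j => by simp [hIx, Finset.mem_filter]
  have hPconv : Convex ℝ P := by
    rw [hPs]
    intro x hx y hy a b ha hb hab
    intro j hj
    have h1 := hx j hj
    have h2 := hy j hj
    rw [inner_add_right, real_inner_smul_right, real_inner_smul_right]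
    calc a * ⟪j.1, x⟫ + b * ⟪j.1, y⟫ ≤ a * j.2 + b * j.2 :=
          add_le_add (mul_le_mul_of_nonneg_left h1 ha) (mul_le_mul_of_nonneg_left h2 hb)
      _ = j.2 := by rw [← add_mul, hab, one_mul]
  -- the maximizer set of u is a face whenever nonempty
  have hmaxface : ∀ u : Euc d, ({z | z ∈ P ∧ ∀ w ∈ P, ⟪u, w⟫ ≤ ⟪u, z⟫}).Nonempty →
      IsFaceOf P {z | z ∈ P ∧ ∀ w ∈ P, ⟪u, w⟫ ≤ ⟪u, z⟫} := by
    intro u hne'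
    refine ⟨hne', ?_, ?_, ?_⟩
    · -- convex
      rintro z₁ ⟨hz₁P, hz₁⟩ z₂ ⟨hz₂P, hz₂⟩ a b ha hb hab
      refine ⟨hPconv hz₁P hz₂P ha hb hab, fun w hw => ?_⟩
      have h1 := hz₁ w hw
      have h2 := hz₂ w hw
      rw [inner_add_right, real_inner_smul_right, real_inner_smul_right]
      calc ⟪u, w⟫ = a * ⟪u, w⟫ + b * ⟪u, w⟫ := by rw [← add_mul, hab, one_mul]
        _ ≤ a * ⟪u, z₁⟫ + b * ⟪u, z₂⟫ :=
          add_le_add (mul_le_mul_of_nonneg_left h1 ha) (mul_le_mul_of_nonneg_left h2 hb)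
    · exact fun z hz => hz.1
    · rintro x hx y hy z ⟨hzP, hzmax⟩ hseg
      obtain ⟨a, b, ha, hb, hab, hz⟩ := hseg
      have hxz : ⟪u, x⟫ = ⟪u, z⟫ ∧ ⟪u, y⟫ = ⟪u, z⟫ := by
        have h1 := hzmax x hx
        have h2 := hzmax y hy
        have h3 : a * ⟪u, x⟫ + b * ⟪u, y⟫ = ⟪u, z⟫ := by
          rw [← hz, inner_add_right, real_inner_smul_right, real_inner_smul_right]
        constructor
        · refine le_antisymm h1 ?_
          have hby : b * ⟪u, y⟫ ≤ b * ⟪u, z⟫ := mul_le_mul_of_nonneg_left h2 hb.le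
          have h4 : a * ⟪u, z⟫ + b * ⟪u, z⟫ = ⟪u, z⟫ := by rw [← add_mul, hab, one_mul]
          have haz : a * ⟪u, z⟫ ≤ a * ⟪u, x⟫ := by linarith
          exact le_of_mul_le_mul_left haz ha
        · refine le_antisymm h2 ?_
          have hax : a * ⟪u, x⟫ ≤ a * ⟪u, z⟫ := mul_le_mul_of_nonneg_left h1 ha.le
          have h4 : a * ⟪u, z⟫ + b * ⟪u, z⟫ = ⟪u, z⟫ := by rw [← add_mul, hab, one_mul]
          have hbz : b * ⟪u, z⟫ ≤ b * ⟪u, y⟫ := by linarith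
          exact le_of_mul_le_mul_left hbz hb
      exact ⟨hx, fun w hw => hxz.1 ▸ hzmax w hw⟩
  constructor
  · ext u
    simp only [Set.mem_iUnion, Set.mem_setOf_eq, exists_prop]
    constructor
    · intro hu
      set M : Set (Euc d) := {z | z ∈ P ∧ ∀ w ∈ P, ⟪u, w⟫ ≤ ⟪u, z⟫} with hM
      have hFM : F ⊆ M := by
        intro f hf
        refine ⟨hFext.1 hf, fun w hw => ?_⟩
        have := hu f hf w hw
        rw [inner_sub_right] at this
        linarith
      have hMne : M.Nonempty := hFne.imp fun f hf => hFM hf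
      obtain ⟨hMne', hMconv, hMext⟩ := hmaxface u hMne
      refine ⟨M, ⟨⟨hMne', hMconv, hMext⟩, hFM⟩, ?_⟩
      exact mem_relint_of_maxSet_eq hPs (hIx_spec M) hMne' hMconv hMext rfl
    · rintro ⟨H, ⟨⟨hHne, hHconv, hHext⟩, hFH⟩, hu⟩
      have huN : u ∈ normalCone P H := intrinsicInterior_subset hu
      intro f hf z hz
      exact huN f (hFH hf) z hz
  · intro H₁ H₂ h₁ hFH₁ h₂ hFH₂ hne'
    rw [Set.disjoint_left]
    intro u hu₁ hu₂
    obtain ⟨hH₁ne, hH₁conv, hH₁ext⟩ := h₁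
    obtain ⟨hH₂ne, hH₂conv, hH₂ext⟩ := h₂
    have e₁ := maxSet_eq_of_mem_relint hPs (hIx_spec H₁) hH₁ne hH₁conv hH₁ext hu₁
    have e₂ := maxSet_eq_of_mem_relint hPs (hIx_spec H₂) hH₂ne hH₂conv hH₂ext hu₂
    exact hne' (e₁.symm.trans e₂)
end
end

section
/- Let T ⊂ ℝ^d be a polyhedral set, C a face of T, and z ∈ relint C. Then there exists ε > 0 such that for all z_1, z_2 in the closed ball B(z,ε) with z_2 - z_1 lying in the linear subspace parallel to the affine hull of C, one has z_1 ∈ T if and only if z_2 ∈ T. -/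
open RealInnerProductSpace Pointwise

noncomputable section

theorem indicator_locally_invariant_along_face {d : ℕ} (T C : Set (Euc d))
    (hT : IsPolyhedral T) (hC : IsFaceOf T C)
    (z : Euc d) (hz : z ∈ intrinsicInterior ℝ C) :
    ∃ ε > (0 : ℝ), ∀ z₁ ∈ Metric.closedBall z ε, ∀ z₂ ∈ Metric.closedBall z ε,
      z₂ - z₁ ∈ (affineSpan ℝ C).direction → (z₁ ∈ T ↔ z₂ ∈ T) := by
  obtain ⟨s, hs⟩ := hT
  have hCT : C ⊆ T := hC.2.2.1
  have hzC : z ∈ C := intrinsicInterior_subset hz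
  have hzT : z ∈ T := hCT hzC
  have hzspan : z ∈ affineSpan ℝ C := subset_affineSpan ℝ C hzC
  -- Step 1: every direction vector can be followed a little within C
  have key : ∀ v ∈ (affineSpan ℝ C).direction, ∃ t : ℝ, 0 < t ∧ z + t • v ∈ C := by
    intro v hv
    obtain ⟨y, hy, hyz⟩ := hz
    have hmem : ∀ t : ℝ, z + t • v ∈ affineSpan ℝ C := by
      intro t
      have := AffineSubspace.vadd_mem_of_mem_direction
        (Submodule.smul_mem _ t hv) hzspan
      simpa [vadd_eq_add, add_comm] using this
    set f : ℝ → affineSpan ℝ C := fun t => ⟨z + t • v, hmem t⟩ with hf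
    have hf0 : f 0 = y := by
      apply Subtype.ext
      simp [hf, hyz]
    have hfc : Continuous f := by
      apply Continuous.subtype_mk
      continuity
    have : f ⁻¹' (interior ((↑) ⁻¹' C : Set (affineSpan ℝ C))) ∈ nhds (0 : ℝ) := by
      apply hfc.continuousAt.preimage_mem_nhds
      rw [hf0]
      exact isOpen_interior.mem_nhds hy
    obtain ⟨δ, hδ, hball⟩ := Metric.mem_nhds_iff.mp this
    refine ⟨δ/2, by linarith, ?_⟩
    have : f (δ/2) ∈ interior ((↑) ⁻¹' C : Set (affineSpan ℝ C)) := by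
      apply hball
      simp only [Metric.mem_ball, Real.dist_eq, sub_zero, abs_of_pos (by linarith : (0:ℝ) < δ/2)]
      linarith
    have hsub : interior ((↑) ⁻¹' C : Set (affineSpan ℝ C)) ⊆ (↑) ⁻¹' C := interior_subset
    exact hsub this
  -- Step 2: tight constraints are orthogonal to the direction space
  have orth : ∀ h ∈ s, ⟪h.1, z⟫ = h.2 →
      ∀ v ∈ (affineSpan ℝ C).direction, ⟪h.1, v⟫ = 0 := by
    intro h hhs heq v hv
    have half : ∀ w ∈ (affineSpan ℝ C).direction, ⟪h.1, w⟫ ≤ 0 := by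
      intro w hw
      obtain ⟨t, ht, htC⟩ := key w hw
      have hT' : z + t • w ∈ T := hCT htC
      rw [hs] at hT'
      have := hT' h hhs
      rw [inner_add_right, real_inner_smul_right, heq] at this
      nlinarith
    have h1 := half v hv
    have h2 := half (-v) (neg_mem hv)
    rw [inner_neg_right] at h2
    linarith
  -- Step 3: choose ε so strict constraints stay strict
  set s' := s.filter (fun h => ⟪h.1, z⟫ < h.2) with hs'
  set U : Set (Euc d) := ⋂ h ∈ s', {x | ⟪h.1, x⟫ < h.2} with hU
  have hUopen : IsOpen U := by
    apply isOpen_biInter_finset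
    intro h _
    exact isOpen_lt (Continuous.inner continuous_const continuous_id) continuous_const
  have hzU : z ∈ U := by
    simp only [hU, Set.mem_iInter]
    intro h hh
    exact (Finset.mem_filter.mp hh).2
  obtain ⟨δ, hδ, hball⟩ := Metric.isOpen_iff.mp hUopen z hzU
  refine ⟨δ/2, by linarith, ?_⟩
  -- Step 4: the symmetric claim
  have main : ∀ z₁ ∈ Metric.closedBall z (δ/2), ∀ z₂ ∈ Metric.closedBall z (δ/2),
      z₂ - z₁ ∈ (affineSpan ℝ C).direction → z₁ ∈ T → z₂ ∈ T := by
    intro z₁ hz₁ z₂ hz₂ hv h₁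
    rw [hs] at h₁ ⊢
    intro h hh
    by_cases hlt : ⟪h.1, z⟫ < h.2
    · have : z₂ ∈ U := hball (lt_of_le_of_lt (Metric.mem_closedBall.mp hz₂) (by linarith))
      simp only [hU, Set.mem_iInter] at this
      exact le_of_lt (this h (Finset.mem_filter.mpr ⟨hh, hlt⟩))
    · have heq : ⟪h.1, z⟫ = h.2 := le_antisymm ((hs ▸ hzT) h hh) (not_lt.mp hlt)
      have := orth h hh heq _ hv
      rw [inner_sub_right] at this
      have h1 := h₁ h hh
      linarith
  intro z₁ hz₁ z₂ hz₂ hv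
  exact ⟨main z₁ hz₁ z₂ hz₂ hv, main z₂ hz₂ z₁ hz₁ (by simpa using neg_mem hv)⟩
end
end

section
/- Let C ⊂ ℝ^d be a closed convex cone containing no line and satisfying C ≠ {0}. Then C ∩ (-C°) ≠ {0}, where C° = {y : ⟨y, c⟩ ≤ 0 for all c ∈ C} is the polar cone; i.e., there exists y ≠ 0 with -y ∈ C and ⟨y, c⟩ ≤ 0 for all c ∈ C. -/
open RealInnerProductSpace Pointwise

noncomputable section

theorem cone_meets_neg_polar {d : ℕ} (C : Set (Euc d))
    (hcl : IsClosed C) (hconv : Convex ℝ C)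
    (hcone : ∀ c ∈ C, ∀ t : ℝ, 0 ≤ t → t • c ∈ C)
    (h0 : (0 : Euc d) ∈ C)
    (hlf : C ∩ (-C) ⊆ {0}) (hne : C ≠ {0}) :
    ∃ y : Euc d, y ≠ 0 ∧ -y ∈ C ∧ ∀ c ∈ C, ⟪y, c⟫ ≤ 0 := by
  -- C as a ConvexCone
  classical
  set K : ConvexCone ℝ (Euc d) :=
    { carrier := C
      smul_mem' := fun t ht c hc => hcone c hc t ht.le
      add_mem' := by
        intro a ha b hb
        have h2 : (2 : ℝ) • ((1/2 : ℝ) • a + (1/2 : ℝ) • b) ∈ C := by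
          refine hcone _ ?_ 2 (by norm_num)
          exact hconv ha hb (by norm_num) (by norm_num) (by norm_num)
        simpa [smul_add, smul_smul] using h2 } with hK
  have hKC : (K : Set (Euc d)) = C := rfl
  -- a nonzero element of C
  obtain ⟨c₀, hc₀C, hc₀⟩ : ∃ c ∈ C, c ≠ 0 := by
    by_contra h
    push_neg at h
    apply hne
    apply Set.eq_singleton_iff_unique_mem.2 ⟨h0, fun x hx => by
      exact h x hx⟩
  -- -c₀ ∉ C
  have hnc₀ : -c₀ ∉ C := by
    intro h
    exact hc₀ (hlf ⟨hc₀C, Set.mem_neg.2 (by simpa using h)⟩)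
  -- separation: get x in the dual cone with ⟪x, c₀⟫ > 0
  obtain ⟨x, hxdual, hxc₀⟩ : ∃ x, (∀ c ∈ C, 0 ≤ ⟪c, x⟫) ∧ ⟪x, -c₀⟫ < 0 := by
    let P : ProperCone ℝ (Euc d) :=
      { carrier := C
        add_mem' := fun ha hb => K.add_mem ha hb
        zero_mem' := h0
        smul_mem' := fun t c hc => by simpa [NNReal.smul_def] using hcone c hc t t.2
        isClosed' := hcl }
    obtain ⟨y, hy1, hy2⟩ := P.hyperplane_separation' (x₀ := -c₀) hnc₀
    exact ⟨y, hy1, by rw [real_inner_comm]; exact hy2⟩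
  replace hxc₀ : 0 < ⟪x, c₀⟫ := by rw [inner_neg_right] at hxc₀; linarith
  -- hxc₀ : 0 < ⟪x, c₀⟫ ; hxdual : ∀ c ∈ K, 0 ≤ ⟪c, x⟫
  -- project x onto C
  obtain ⟨p, hpC, hinf⟩ :=
    exists_norm_eq_iInf_of_complete_convex ⟨0, h0⟩ hcl.isComplete hconv x
  have hinner := (norm_eq_iInf_iff_real_inner_le_zero hconv hpC).1 hinf
  -- ∀ w ∈ C, ⟪x - p, w - p⟫ ≤ 0
  have hxp_p : ⟪x - p, p⟫ = 0 := by
    have h1 := hinner 0 h0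
    have h2 := hinner ((2:ℝ) • p) (hcone p hpC 2 (by norm_num))
    rw [zero_sub, inner_neg_right] at h1
    have h2' : ⟪x - p, p⟫ ≤ 0 := by
      have : (2:ℝ) • p - p = p := by
        rw [two_smul]; abel
      rwa [this] at h2
    linarith
  have hxp_w : ∀ w ∈ C, ⟪x - p, w⟫ ≤ 0 := by
    intro w hw
    have h1 := hinner (w + p) (by
      have h2 : (2 : ℝ) • ((1/2 : ℝ) • w + (1/2 : ℝ) • p) ∈ C := by
        refine hcone _ ?_ 2 (by norm_num)
        exact hconv hw hpC (by norm_num) (by norm_num) (by norm_num)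
      simpa [smul_add, smul_smul] using h2)
    rwa [add_sub_cancel_right] at h1
  -- p is in the dual cone
  have hpdual : ∀ c ∈ C, 0 ≤ ⟪p, c⟫ := by
    intro c hc
    have h1 : 0 ≤ ⟪c, x⟫ := hxdual c hc
    have h2 : ⟪x - p, c⟫ ≤ 0 := hxp_w c hc
    rw [inner_sub_left] at h2
    rw [real_inner_comm] at h1
    linarith
  -- p ≠ 0
  have hp0 : p ≠ 0 := by
    intro h
    apply absurd hxc₀
    push_neg
    have := hxp_w c₀ hc₀C
    rw [h, sub_zero] at this
    linarith
  exact ⟨-p, neg_ne_zero.2 hp0, by simpa using hpC, fun c hc => by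
    rw [inner_neg_left]; linarith [hpdual c hc]⟩
end
end

section
/- Let P be a nonempty bounded polyhedral set in ℝ^d, p a vertex of P, and u in the interior of N(P,{p}). Then there exists λ_0 > 0 such that for all λ > λ_0, the point p - λu lies in p - N(P,{p}) but lies in no set F - N(P,F) for any face F ≠ {p}; consequently Σ_{F face} (-1)^{dim F} 1_{F - N(P,F)}(p - λu) = 1. -/
open RealInnerProductSpace Pointwise

noncomputable section

theorem phi_at_point_beyond_vertex {d : ℕ} (P : Set (Euc d))
    (hP : IsPolyhedral P) (hb : Bornology.IsBounded P) (hne : P.Nonempty)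
    (p u : Euc d) (hv : IsFaceOf P {p})
    (hu : u ∈ interior (normalCone P {p})) :
    ∃ lam₀ > (0 : ℝ), ∀ lam > lam₀,
      (p - lam • u ∈ ({p} : Set (Euc d)) - normalCone P {p}) ∧
      (∀ F : Set (Euc d), IsFaceOf P F → F ≠ {p} →
        p - lam • u ∉ F - normalCone P F) ∧
      phi P (p - lam • u) = 1 := by
  classical
  have hpP : p ∈ P := hv.2.2.1 rfl
  obtain ⟨δ, hδ0, hball⟩ : ∃ δ > (0:ℝ), Metric.ball u δ ⊆ normalCone P {p} := by
    rcases Metric.mem_nhds_iff.1 (mem_interior_iff_mem_nhds.1 hu) with ⟨δ, hδ0, hball⟩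
    exact ⟨δ, hδ0, hball⟩
  set c : ℝ := δ / 2 with hc
  have hc0 : 0 < c := by positivity
  -- key strict inequality
  have key : ∀ z ∈ P, ⟪u, z - p⟫ ≤ -c * ‖z - p‖ := by
    intro z hz
    by_cases hzp : z = p
    · simp [hzp]
    have hn : (0:ℝ) < ‖z - p‖ := norm_pos_iff.mpr (sub_ne_zero_of_ne hzp)
    have hv' : u + (c / ‖z - p‖) • (z - p) ∈ normalCone P {p} := by
      apply hball
      rw [Metric.mem_ball, dist_eq_norm]
      have h0 : u + (c / ‖z - p‖) • (z - p) - u = (c / ‖z - p‖) • (z - p) := by abel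
      rw [h0, norm_smul, Real.norm_eq_abs, abs_of_pos (by positivity),
        div_mul_cancel₀ _ (ne_of_gt hn)]
      rw [hc]; linarith
    have h1 := hv' p rfl z hz
    rw [inner_add_left, real_inner_smul_left, real_inner_self_eq_norm_sq] at h1
    have heq : c / ‖z - p‖ * ‖z - p‖ ^ 2 = c * ‖z - p‖ := by
      field_simp
    rw [heq] at h1
    linarith
  obtain ⟨R, hR⟩ := hb.subset_closedBall p
  have hR0 : 0 ≤ R := by
    have := hR hpP; simpa using this
  refine ⟨R / c + 1, by positivity, ?_⟩
  intro lam hlam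
  have hlam0 : 0 < lam := lt_trans (by positivity) hlam
  -- Part 1
  have part1 : p - lam • u ∈ ({p} : Set (Euc d)) - normalCone P {p} := by
    refine ⟨p, rfl, lam • u, ?_, rfl⟩
    intro f hf z hz
    rw [Set.mem_singleton_iff] at hf
    rw [hf, real_inner_smul_left]
    have h1 := key z hz
    have h2 : 0 ≤ c * ‖z - p‖ := by positivity
    nlinarith [mul_le_mul_of_nonneg_left h1 hlam0.le]
  -- Part 2
  have part2 : ∀ F : Set (Euc d), IsFaceOf P F → F ≠ {p} →
      p - lam • u ∉ F - normalCone P F := by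
    intro F hF hFne hmem
    obtain ⟨f, hf, w, hw, hfw⟩ := hmem
    have hfP : f ∈ P := hF.2.2.1 hf
    have hwv : w = f - p + lam • u := by
      have h0 : f - w = p - lam • u := hfw
      linear_combination (norm := module) -h0
    by_cases hfp : f = p
    · -- f = p : F contains another point q ≠ p
      have hwl : w = lam • u := by rw [hwv, hfp]; abel
      have hpF : p ∈ F := hfp ▸ hf
      obtain ⟨q, hq, hqp⟩ : ∃ q ∈ F, q ≠ p := by
        by_contra h
        push_neg at h
        exact hFne (Set.eq_singleton_iff_unique_mem.2 ⟨hpF, h⟩)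
      have hqP : q ∈ P := hF.2.2.1 hq
      have h1 := hw q hq p hpP
      rw [hwl, real_inner_smul_left] at h1
      have h3 := key q hqP
      have hn : (0:ℝ) < ‖q - p‖ := norm_pos_iff.mpr (sub_ne_zero_of_ne hqp)
      have h4 : ⟪u, p - q⟫ = -⟪u, q - p⟫ := by
        rw [show p - q = -(q - p) by abel, inner_neg_right]
      nlinarith [mul_le_mul_of_nonneg_left h3 hlam0.le,
        mul_pos hlam0 (mul_pos hc0 hn), h1, h4]
    · -- f ≠ p
      have h1 := hw f hf p hpP
      rw [hwv, inner_add_left, real_inner_smul_left] at h1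
      have hpf : (p : Euc d) - f = -(f - p) := by abel
      have h2 : ⟪f - p, p - f⟫ = -‖f - p‖^2 := by
        rw [hpf, inner_neg_right, real_inner_self_eq_norm_sq]
      have h3 : ⟪u, p - f⟫ = -⟪u, f - p⟫ := by rw [hpf, inner_neg_right]
      have h4 := key f hfP
      have hn : (0:ℝ) < ‖f - p‖ := norm_pos_iff.mpr (sub_ne_zero_of_ne hfp)
      have h5 : ‖f - p‖ ≤ R := by
        have h := hR hfP
        rw [Metric.mem_closedBall, dist_eq_norm] at h
        exact h
      have h9 : c * ‖f - p‖ ≤ ⟪u, p - f⟫ := by rw [h3]; linarith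
      have h6 : lam * (c * ‖f - p‖) ≤ ‖f - p‖ ^ 2 := by
        have h10 := mul_le_mul_of_nonneg_left h9 hlam0.le
        linarith
      have h7 : lam * c ≤ ‖f - p‖ := by
        by_contra hcon
        push_neg at hcon
        nlinarith [h6, hn]
      have h8 : lam ≤ R / c := by
        rw [le_div_iff₀ hc0]
        linarith
      linarith
  refine ⟨part1, part2, ?_⟩
  -- Part 3
  set x := p - lam • u with hx
  unfold phi
  set g : Set (Euc d) → ℤ := fun F =>
    (-1 : ℤ) ^ sdim F * (F - normalCone P F).indicator (fun _ => (1 : ℤ)) x with hg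
  have hsum : ∑ᶠ F ∈ {F : Set (Euc d) | IsFaceOf P F}, g F
      = Set.indicator {F : Set (Euc d) | IsFaceOf P F} g {p} := by
    rw [finsum_mem_def]
    apply finsum_eq_single
    intro F hFne
    rw [Set.indicator_apply]
    split_ifs with hFface
    · have hnot := part2 F hFface hFne
      simp only [hg, Set.indicator_of_notMem hnot, mul_zero]
    · rfl
  rw [hsum, Set.indicator_apply,
    if_pos (show ({p} : Set (Euc d)) ∈ {F : Set (Euc d) | IsFaceOf P F} from hv)]
  have hdim : sdim ({p} : Set (Euc d)) = 0 := by
    unfold sdim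
    rw [direction_affineSpan, vectorSpan_singleton]
    exact finrank_bot ℝ _
  simp only [hg, hdim, pow_zero, one_mul, Set.indicator_of_mem part1]
end
end

section
/- Let P = conv{a_1,…,a_k} + pos{b_1,…,b_m} be an unbounded line-free polyhedral set in ℝ^d, let C = pos{b_1,…,b_m}, and let y ∈ C° \ {0} with -y ∈ C. Assume ⟨a_1, y⟩ = max_i ⟨a_i, y⟩. Then the point a_1 + y does not belong to F - N(P,F) for any nonempty face F of P. -/
open RealInnerProductSpace Pointwise

noncomputable section

theorem point_beyond_unbounded_polyhedron {d k m : ℕ}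
    (a : Fin (k + 1) → Euc d) (b : Fin m → Euc d) (hb : ∀ i, b i ≠ 0)
    (C P : Set (Euc d))
    (hC : C = {x | ∃ c : Fin m → ℝ, (∀ i, 0 ≤ c i) ∧ x = ∑ i, c i • b i})
    (hP : P = convexHull ℝ (Set.range a) + C)
    (hub : ¬ Bornology.IsBounded P) (hlf : LineFree P)
    (y : Euc d) (hy : y ≠ 0) (hyC : -y ∈ C)
    (hpol : ∀ c ∈ C, ⟪y, c⟫ ≤ 0)
    (hmax : ∀ i, ⟪a i, y⟫ ≤ ⟪a 0, y⟫) :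
    ∀ F : Set (Euc d), IsFaceOf P F → a 0 + y ∉ F - normalCone P F := by
  intro F hF hmem
  rw [Set.mem_sub] at hmem
  obtain ⟨f, hfF, u, huN, hfu⟩ := hmem
  have hfP : f ∈ P := hF.2.2.1 hfF
  rw [hP, Set.mem_add] at hfP
  obtain ⟨q, hq, c, hc, hqc⟩ := hfP
  -- c + (-y) ∈ C
  have hcy : c + (-y) ∈ C := by
    rw [hC] at hc hyC ⊢
    obtain ⟨cc, hcc, rfl⟩ := hc
    obtain ⟨cy, hcy, hy'⟩ := hyC
    exact ⟨fun i => cc i + cy i, fun i => add_nonneg (hcc i) (hcy i), by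
      simp [add_smul, Finset.sum_add_distrib, hy']⟩
  -- f - y ∈ P
  have hfyP : f - y ∈ P := by
    rw [hP, Set.mem_add]
    exact ⟨q, hq, c + (-y), hcy, by rw [← hqc]; abel⟩
  -- from normal cone: ⟪u, -y⟫ ≤ 0
  have h1 : ⟪u, (f - y) - f⟫ ≤ 0 := huN f hfF (f - y) hfyP
  have h1' : 0 ≤ ⟪u, y⟫ := by
    have : (f - y) - f = -y := by abel
    rw [this, inner_neg_right] at h1
    linarith
  -- u = f - a 0 - y
  have hu : u = f - a 0 - y := by
    have := hfu
    rw [sub_eq_iff_eq_add] at this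
    rw [this]; abel
  -- ⟪q, y⟫ ≤ ⟪a 0, y⟫
  have hqy : ⟪q, y⟫ ≤ ⟪a 0, y⟫ := by
    have hsub : convexHull ℝ (Set.range a) ⊆ {x : Euc d | ⟪x, y⟫ ≤ ⟪a 0, y⟫} := by
      apply convexHull_min
      · rintro _ ⟨i, rfl⟩; exact hmax i
      · exact convex_halfSpace_le ⟨fun x z => inner_add_left x z y,
          fun r x => real_inner_smul_left x y r⟩ _
    exact hsub hq
  -- ⟪c, y⟫ ≤ 0
  have hcy' : ⟪c, y⟫ ≤ 0 := by
    rw [real_inner_comm]; exact hpol c hc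
  -- ⟪f, y⟫ ≤ ⟪a 0, y⟫
  have hfy : ⟪f, y⟫ ≤ ⟪a 0, y⟫ := by
    rw [← hqc, inner_add_left]; linarith
  have hyy : 0 < ⟪y, y⟫ := lt_of_le_of_ne real_inner_self_nonneg (fun h => hy (real_inner_self_nonpos.mp h.ge))
  rw [hu, inner_sub_left, inner_sub_left] at h1'
  linarith
end
end

section
/- Let P ⊂ ℝ^d be a full-dimensional polyhedral set with facets F_1,…,F_n having exterior unit normals u_1,…,u_n, and let F be a nonempty face of P. Then N(P,F) = pos{u_i : F ⊆ F_i}, and the faces of the cone N(P,F) are exactly the cones N(P,H) for faces H of P with F ⊆ H. -/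
open RealInnerProductSpace Pointwise

noncomputable section

/-- The positive hull of a set: all finite nonnegative combinations. -/
def posHullOf {d : ℕ} (A : Set (Euc d)) : Set (Euc d) :=
  {x | ∃ (s : Finset (Euc d)) (c : Euc d → ℝ),
    ↑s ⊆ A ∧ (∀ e, 0 ≤ c e) ∧ x = ∑ e ∈ s, c e • e}

section AuxProofs

variable {d : ℕ}

lemma zero_mem_posHullOf (A : Set (Euc d)) : (0:Euc d) ∈ posHullOf A :=
  ⟨∅, fun _ => 0, by simp, fun _ => le_refl _, by simp⟩

lemma posHullOf_mono {A B : Set (Euc d)} (h : A ⊆ B) : posHullOf A ⊆ posHullOf B := by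
  rintro x ⟨s, c, hs, hc, rfl⟩; exact ⟨s, c, hs.trans h, hc, rfl⟩

lemma mem_posHullOf_self {A : Set (Euc d)} {a : Euc d} (ha : a ∈ A) : a ∈ posHullOf A := by
  classical
  refine ⟨{a}, fun e => if e = a then 1 else 0, by simpa using ha, ?_, by simp⟩
  intro e; dsimp only; split <;> norm_num

lemma add_mem_posHullOf {A : Set (Euc d)} {x y : Euc d} (hx : x ∈ posHullOf A)
    (hy : y ∈ posHullOf A) : x + y ∈ posHullOf A := by
  classical
  obtain ⟨s, c, hs, hc, rfl⟩ := hx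
  obtain ⟨t, b, ht, hb, rfl⟩ := hy
  refine ⟨s ∪ t, fun e => (if e ∈ s then c e else 0) + (if e ∈ t then b e else 0), ?_, ?_, ?_⟩
  · intro e he
    rcases Finset.mem_union.mp he with h | h
    · exact hs h
    · exact ht h
  · intro e
    apply add_nonneg <;> (split <;> simp [hc _, hb _])
  · rw [Finset.sum_congr rfl (fun e _ => add_smul _ _ e), Finset.sum_add_distrib]
    congr 1
    · rw [show ∑ x ∈ s ∪ t, (if x ∈ s then c x else 0) • x
          = ∑ x ∈ s ∪ t, (if x ∈ s then c x • x else 0) from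
          Finset.sum_congr rfl (fun e _ => by split <;> simp),
        Finset.sum_ite_mem, Finset.union_inter_cancel_left]
    · rw [show ∑ x ∈ s ∪ t, (if x ∈ t then b x else 0) • x
          = ∑ x ∈ s ∪ t, (if x ∈ t then b x • x else 0) from
          Finset.sum_congr rfl (fun e _ => by split <;> simp),
        Finset.sum_ite_mem, Finset.union_inter_cancel_right]

lemma smul_mem_posHullOf {A : Set (Euc d)} {x : Euc d} {t : ℝ} (ht : 0 ≤ t)
    (hx : x ∈ posHullOf A) : t • x ∈ posHullOf A := by
  obtain ⟨s, c, hs, hc, rfl⟩ := hx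
  exact ⟨s, fun e => t * c e, hs, fun e => mul_nonneg ht (hc e),
    by rw [Finset.smul_sum]; exact Finset.sum_congr rfl fun e _ => by dsimp only; rw [smul_smul]⟩

lemma convex_posHullOf (A : Set (Euc d)) : Convex ℝ (posHullOf A) := by
  intro x hx y hy a b ha hb _
  exact add_mem_posHullOf (smul_mem_posHullOf ha hx) (smul_mem_posHullOf hb hy)

lemma carath_aux (N : ℕ) : ∀ (s : Finset (Euc d)) (c : Euc d → ℝ), s.card ≤ N → (∀ e, 0 ≤ c e) →
    ∃ (t : Finset (Euc d)) (b : Euc d → ℝ), t ⊆ s ∧ (∀ e, 0 ≤ b e) ∧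
      (∑ e ∈ t, b e • e) = ∑ e ∈ s, c e • e ∧
      LinearIndependent ℝ (fun e : t => (e : Euc d)) := by
  classical
  induction N with
  | zero =>
    intro s c hcard _
    rw [Nat.le_zero, Finset.card_eq_zero] at hcard
    subst hcard
    exact ⟨∅, fun _ => 0, subset_rfl, fun _ => le_refl _, by simp, linearIndependent_empty_type⟩
  | succ N ih =>
    intro s c hcard hc
    by_cases hli : LinearIndependent ℝ (fun e : s => (e : Euc d))
    · exact ⟨s, c, subset_rfl, hc, rfl, hli⟩
    · rw [Fintype.not_linearIndependent_iff] at hli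
      obtain ⟨g, hgsum, i0, hgi0⟩ := hli
      set g' : Euc d → ℝ := fun e => if h : e ∈ s then g ⟨e, h⟩ else 0 with hg'
      have hg'sum : ∑ e ∈ s, g' e • e = 0 := by
        rw [← hgsum, ← Finset.sum_coe_sort s (fun e => g' e • e)]
        exact Finset.sum_congr rfl fun i _ => by simp [hg', i.2]
      have hg'i0 : g' (i0 : Euc d) ≠ 0 := by simp [hg', i0.2, hgi0]
      -- get a version with a positive coefficient somewhere
      obtain ⟨g2, hg2sum, e0, he0s, he0pos⟩ :
          ∃ g2 : Euc d → ℝ, (∑ e ∈ s, g2 e • e = 0) ∧ ∃ e0 ∈ s, 0 < g2 e0 := by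
        rcases lt_or_gt_of_ne hg'i0 with hneg | hpos
        · refine ⟨fun e => -g' e, ?_, i0, i0.2, by simpa using hneg⟩
          simp only [neg_smul, Finset.sum_neg_distrib, hg'sum, neg_zero]
        · exact ⟨g', hg'sum, i0, i0.2, hpos⟩
      set T : Finset (Euc d) := s.filter (fun e => 0 < g2 e) with hT
      have hTne : T.Nonempty := ⟨e0, Finset.mem_filter.mpr ⟨he0s, he0pos⟩⟩
      obtain ⟨estar, hestar, hmin⟩ := Finset.exists_mem_eq_inf' hTne (fun e => c e / g2 e)
      set t0 : ℝ := T.inf' hTne (fun e => c e / g2 e) with ht0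
      have hestarS : estar ∈ s := (Finset.mem_filter.mp hestar).1
      have hg2estar : 0 < g2 estar := (Finset.mem_filter.mp hestar).2
      have ht0nn : 0 ≤ t0 := by
        rw [hmin]; exact div_nonneg (hc estar) hg2estar.le
      set c2 : Euc d → ℝ := fun e => if e ∈ s then c e - t0 * g2 e else 0 with hc2
      have hc2nn : ∀ e, 0 ≤ c2 e := by
        intro e
        simp only [hc2]
        split
        · rename_i hes
          by_cases hpos : 0 < g2 e
          · have hle : t0 ≤ c e / g2 e := Finset.inf'_le _ (Finset.mem_filter.mpr ⟨hes, hpos⟩)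
            rw [le_div_iff₀ hpos] at hle
            linarith
          · push_neg at hpos
            nlinarith [hc e, mul_nonneg ht0nn (neg_nonneg.mpr hpos)]
        · exact le_refl _
      have hc2estar : c2 estar = 0 := by
        simp only [hc2, if_pos hestarS, hmin]
        field_simp
        simp
      have h1 : ∑ e ∈ s, c2 e • e = ∑ e ∈ s, c e • e := by
        have heq : ∀ e ∈ s, c2 e • e = c e • e - t0 • (g2 e • e) := by
          intro e hes
          simp only [hc2, if_pos hes, sub_smul, smul_smul]
        rw [Finset.sum_congr rfl heq, Finset.sum_sub_distrib, ← Finset.smul_sum, hg2sum,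
          smul_zero, sub_zero]
      have h2 : ∑ e ∈ s.erase estar, c2 e • e = ∑ e ∈ s, c2 e • e := by
        rw [← Finset.add_sum_erase s (fun e => c2 e • e) hestarS, hc2estar, zero_smul, zero_add]
      have hcard' : (s.erase estar).card ≤ N := by
        have := Finset.card_erase_of_mem hestarS
        omega
      obtain ⟨t, b, hts, hbnn, hbsum, hli2⟩ := ih (s.erase estar) c2 hcard' hc2nn
      exact ⟨t, b, hts.trans (Finset.erase_subset _ _), hbnn,
        by rw [hbsum, h2, h1], hli2⟩

lemma isClosed_linIndep_cone (s : Finset (Euc d))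
    (hli : LinearIndependent ℝ (fun e : s => (e : Euc d))) :
    IsClosed {x : Euc d | ∃ c : Euc d → ℝ, (∀ e, 0 ≤ c e) ∧ x = ∑ e ∈ s, c e • e} := by
  classical
  have hli' : LinearIndepOn ℝ id (↑s : Set (Euc d)) := hli
  set E : Set (Euc d) := hli'.extend (Set.subset_univ _) with hE
  set B : Module.Basis E ℝ (Euc d) := Module.Basis.extend hli' with hB
  haveI : Fintype E := FiniteDimensional.fintypeBasisIndex B
  have hsub : (↑s : Set (Euc d)) ⊆ E := hli'.subset_extend _
  have hBapp : ∀ j : E, B j = (j : Euc d) := fun j => Module.Basis.extend_apply_self hli' j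
  have hrepr : ∀ (c : Euc d → ℝ) (j : E), B.repr (∑ e ∈ s, c e • e) j
      = ∑ e ∈ s, c e * (if (e : Euc d) = (j : Euc d) then 1 else 0) := by
    intro c j
    rw [map_sum, Finsupp.finset_sum_apply]
    refine Finset.sum_congr rfl fun e he => ?_
    have heE : e ∈ E := hsub he
    have h2 : B.repr e j = if e = (j : Euc d) then 1 else 0 := by
      conv_lhs => rw [show e = B ⟨e, heE⟩ from (hBapp ⟨e, heE⟩).symm]
      rw [Module.Basis.repr_self, Finsupp.single_apply]
      simp [Subtype.ext_iff]
    rw [map_smul, Finsupp.smul_apply, h2, smul_eq_mul]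
  have hset : {x : Euc d | ∃ c : Euc d → ℝ, (∀ e, 0 ≤ c e) ∧ x = ∑ e ∈ s, c e • e}
      = (⋂ (j : E) (_ : (j : Euc d) ∉ s), {x | B.coord j x = 0}) ∩
        (⋂ (e : Euc d) (he : e ∈ s), {x | 0 ≤ B.coord ⟨e, hsub he⟩ x}) := by
    ext x
    constructor
    · rintro ⟨c, hc, rfl⟩
      constructor
      · refine Set.mem_iInter.mpr fun j => Set.mem_iInter.mpr fun hj => ?_
        simp only [Set.mem_setOf_eq, Module.Basis.coord_apply, hrepr]
        refine Finset.sum_eq_zero fun e he => ?_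
        rw [if_neg, mul_zero]
        intro hv; exact hj (hv ▸ he)
      · refine Set.mem_iInter.mpr fun e => Set.mem_iInter.mpr fun he => ?_
        simp only [Set.mem_setOf_eq, Module.Basis.coord_apply, hrepr]
        rw [Finset.sum_eq_single e]
        · simp [hc e]
        · intro e' he' hne; rw [if_neg hne, mul_zero]
        · intro h; exact absurd he h
    · rintro ⟨h1, h2⟩
      refine ⟨fun e => if he : e ∈ s then B.coord ⟨e, hsub he⟩ x else 0, ?_, ?_⟩
      · intro e
        dsimp only
        by_cases he : e ∈ s
        · rw [dif_pos he]
          exact Set.mem_iInter.mp (Set.mem_iInter.mp h2 e) he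
        · rw [dif_neg he]
      · have hx2 : ∑ j : E, B.repr x j • B j = x := B.sum_repr x
        have key : ∑ e ∈ s, (if he : e ∈ s then B.coord ⟨e, hsub he⟩ x else 0) • e
            = ∑ j : E, B.repr x j • B j := by
          rw [← Finset.sum_coe_sort s
            (fun e => (if he : e ∈ s then B.coord ⟨e, hsub he⟩ x else 0) • e)]
          have hterm : ∀ i : s,
              (if he : (i : Euc d) ∈ s then B.coord ⟨(i : Euc d), hsub he⟩ x else 0) • (i : Euc d)
              = B.repr x ⟨(i : Euc d), hsub i.2⟩ • B ⟨(i : Euc d), hsub i.2⟩ := by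
            intro i
            rw [dif_pos i.2, hBapp ⟨(i : Euc d), hsub i.2⟩, Module.Basis.coord_apply]
          rw [Finset.sum_congr rfl (fun i _ => hterm i)]
          rw [show (∑ j : E, B.repr x j • B j)
              = ∑ j ∈ Finset.univ.filter (fun j : E => (j : Euc d) ∈ s),
                B.repr x j • B j from ?_]
          · exact Finset.sum_bij (fun (i : s) _ => (⟨(i : Euc d), hsub i.2⟩ : E))
              (fun i _ => by simp [i.2]) (fun i _ i' _ h => by simp only [Subtype.mk.injEq] at h; exact Subtype.ext h)
              (fun j hj => ⟨⟨(j : Euc d), (Finset.mem_filter.mp hj).2⟩, Finset.mem_univ _,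
                Subtype.ext rfl⟩) (fun i _ => rfl)
          · symm
            refine Finset.sum_subset (Finset.subset_univ _) fun j _ hj => ?_
            have hjs : (j : Euc d) ∉ s := fun h => hj (Finset.mem_filter.mpr ⟨Finset.mem_univ _, h⟩)
            have h0 := Set.mem_iInter.mp (Set.mem_iInter.mp h1 j) hjs
            simp only [Set.mem_setOf_eq, Module.Basis.coord_apply] at h0
            rw [h0, zero_smul]
        exact hx2.symm.trans key.symm
  rw [hset]
  refine IsClosed.inter ?_ ?_
  · refine isClosed_iInter fun j => isClosed_iInter fun _ => ?_
    exact isClosed_eq (LinearMap.continuous_of_finiteDimensional (B.coord j)) continuous_const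
  · refine isClosed_iInter fun e => isClosed_iInter fun he => ?_
    exact isClosed_le continuous_const (LinearMap.continuous_of_finiteDimensional (B.coord _))

lemma isClosed_posHullOf (A : Finset (Euc d)) : IsClosed (posHullOf (↑A : Set (Euc d))) := by
  classical
  have hunion : posHullOf (↑A : Set (Euc d)) =
      ⋃ s ∈ {s : Finset (Euc d) | s ⊆ A ∧ LinearIndependent ℝ (fun e : s => (e : Euc d))},
        {x : Euc d | ∃ c : Euc d → ℝ, (∀ e, 0 ≤ c e) ∧ x = ∑ e ∈ s, c e • e} := by
    ext x
    constructor
    · rintro ⟨s, c, hs, hc, rfl⟩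
      obtain ⟨t, b, hts, hb, hsum, hli⟩ := carath_aux s.card s c le_rfl hc
      refine Set.mem_iUnion.mpr ⟨t, Set.mem_iUnion.mpr ⟨?_, ⟨b, hb, hsum.symm⟩⟩⟩
      exact ⟨fun e he => by exact_mod_cast hs (hts he), hli⟩
    · intro hx
      obtain ⟨s, hs, c, hc, rfl⟩ := by
        simpa only [Set.mem_iUnion, Set.mem_setOf_eq] using hx
      exact ⟨s, c, by exact_mod_cast fun e he => Finset.mem_coe.mpr (hs.1 (Finset.mem_coe.mp he)), hc, rfl⟩
  rw [hunion]
  refine Set.Finite.isClosed_biUnion ?_ ?_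
  · apply Set.Finite.subset (A.powerset.finite_toSet)
    intro s hs
    exact Finset.mem_coe.mpr (Finset.mem_powerset.mpr hs.1)
  · rintro s ⟨_, hli⟩
    exact isClosed_linIndep_cone s hli

lemma farkas (A : Finset (Euc d)) (b : Euc d)
    (h : ∀ w : Euc d, (∀ a ∈ A, ⟪a, w⟫ ≤ 0) → ⟪b, w⟫ ≤ 0) :
    b ∈ posHullOf (↑A : Set (Euc d)) := by
  by_contra hb
  let K : ProperCone ℝ (Euc d) :=
    { carrier := posHullOf (↑A : Set (Euc d))
      add_mem' := fun hx hy => add_mem_posHullOf hx hy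
      zero_mem' := zero_mem_posHullOf _
      smul_mem' := fun c x hx => smul_mem_posHullOf c.2 hx
      isClosed' := isClosed_posHullOf A }
  obtain ⟨y, hy1, hy2⟩ := K.hyperplane_separation' (x₀ := b) hb
  have hw : ∀ a ∈ A, ⟪a, -y⟫ ≤ 0 := by
    intro a ha
    rw [inner_neg_right]
    have : (0:ℝ) ≤ ⟪a, y⟫ := hy1 a (mem_posHullOf_self (Finset.mem_coe.mpr ha))
    linarith
  have hby := h (-y) hw
  rw [inner_neg_right] at hby
  linarith

section Geometry

variable {n : ℕ} (u : Fin n → Euc d) (α : Fin n → ℝ)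

lemma zero_mem_normalCone (P F : Set (Euc d)) : (0 : Euc d) ∈ normalCone P F := by
  intro f _ z _; simp

lemma add_mem_normalCone {P F : Set (Euc d)} {x y : Euc d} (hx : x ∈ normalCone P F)
    (hy : y ∈ normalCone P F) : x + y ∈ normalCone P F := by
  intro f hf z hz
  rw [inner_add_left]
  linarith [hx f hf z hz, hy f hf z hz]

lemma smul_mem_normalCone {P F : Set (Euc d)} {x : Euc d} {t : ℝ} (ht : 0 ≤ t)
    (hx : x ∈ normalCone P F) : t • x ∈ normalCone P F := by
  intro f hf z hz
  rw [real_inner_smul_left]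
  exact mul_nonpos_of_nonneg_of_nonpos ht (hx f hf z hz)

lemma sum_mem_normalCone {P F : Set (Euc d)} {ι : Type*} (s : Finset ι) (c : ι → ℝ)
    (f : ι → Euc d) (hc : ∀ e, 0 ≤ c e) (he : ∀ e ∈ s, f e ∈ normalCone P F) :
    (∑ e ∈ s, c e • f e) ∈ normalCone P F := by
  classical
  induction s using Finset.induction with
  | empty => simpa using zero_mem_normalCone P F
  | @insert a s' hnotmem ih =>
    rw [Finset.sum_insert hnotmem]
    exact add_mem_normalCone (smul_mem_normalCone (hc a) (he a (Finset.mem_insert_self a s')))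
      (ih fun e hes => he e (Finset.mem_insert_of_mem hes))

lemma convex_normalCone (P F : Set (Euc d)) : Convex ℝ (normalCone P F) := by
  intro x hx y hy a b ha hb _
  exact add_mem_normalCone (smul_mem_normalCone ha hx) (smul_mem_normalCone hb hy)

/-- Existence of a point of `F` whose active set is exactly `{i | F ⊆ Fᵢ}`. -/
lemma exists_minimal_active {P : Set (Euc d)} (hP : P = {x | ∀ i, ⟪u i, x⟫ ≤ α i})
    {F : Set (Euc d)} (hFP : F ⊆ P) (hconv : Convex ℝ F) (hne : F.Nonempty) :
    ∃ f₀ ∈ F, ∀ i, (⟪u i, f₀⟫ = α i ↔ ∀ g ∈ F, ⟪u i, g⟫ = α i) := by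
  classical
  set Af : Euc d → Finset (Fin n) := fun f => Finset.univ.filter (fun i => ⟪u i, f⟫ = α i) with hAf
  set m : ℕ := sInf ((fun f => (Af f).card) '' F) with hm
  have hmmem : m ∈ (fun f => (Af f).card) '' F := Nat.sInf_mem (hne.image _)
  obtain ⟨f₀, hf₀F, hf₀card⟩ := hmmem
  refine ⟨f₀, hf₀F, fun i => ⟨fun hi g hg => ?_, fun h => h f₀ hf₀F⟩⟩
  have hmid : (1/2 : ℝ) • f₀ + (1/2 : ℝ) • g ∈ F :=
    hconv hf₀F hg (by norm_num) (by norm_num) (by norm_num)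
  have hsub1 : Af ((1/2 : ℝ) • f₀ + (1/2 : ℝ) • g) ⊆ Af f₀ := by
    intro j hj
    simp only [hAf, Finset.mem_filter, Finset.mem_univ, true_and] at hj ⊢
    rw [inner_add_right, real_inner_smul_right, real_inner_smul_right] at hj
    have h1 : ⟪u j, f₀⟫ ≤ α j := by
      have := hFP hf₀F; rw [hP] at this; exact this j
    have h2 : ⟪u j, g⟫ ≤ α j := by
      have := hFP hg; rw [hP] at this; exact this j
    linarith
  have hsub2 : Af ((1/2 : ℝ) • f₀ + (1/2 : ℝ) • g) ⊆ Af g := by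
    intro j hj
    simp only [hAf, Finset.mem_filter, Finset.mem_univ, true_and] at hj ⊢
    rw [inner_add_right, real_inner_smul_right, real_inner_smul_right] at hj
    have h1 : ⟪u j, f₀⟫ ≤ α j := by
      have := hFP hf₀F; rw [hP] at this; exact this j
    have h2 : ⟪u j, g⟫ ≤ α j := by
      have := hFP hg; rw [hP] at this; exact this j
    linarith
  have hcardle : (Af f₀).card ≤ (Af ((1/2 : ℝ) • f₀ + (1/2 : ℝ) • g)).card := by
    have hle : m ≤ (Af ((1/2 : ℝ) • f₀ + (1/2 : ℝ) • g)).card := by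
      rw [hm]; exact Nat.sInf_le ⟨_, hmid, rfl⟩
    calc (Af f₀).card = m := hf₀card
    _ ≤ _ := hle
  have heq : Af ((1/2 : ℝ) • f₀ + (1/2 : ℝ) • g) = Af f₀ :=
    Finset.eq_of_subset_of_card_le hsub1 hcardle
  have hiAf : i ∈ Af f₀ := Finset.mem_filter.mpr ⟨Finset.mem_univ _, hi⟩
  rw [← heq] at hiAf
  exact (Finset.mem_filter.mp (hsub2 hiAf)).2

/-- Moving a small positive distance along `w` from a point of `P`. -/
lemma exists_delta {P : Set (Euc d)} (hP : P = {x | ∀ i, ⟪u i, x⟫ ≤ α i})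
    {f₀ : Euc d} (hf₀ : f₀ ∈ P) (w : Euc d) :
    ∃ δ : ℝ, 0 < δ ∧ ∀ i, (⟪u i, f₀⟫ < α i → ⟪u i, f₀ + δ • w⟫ < α i) ∧
      (⟪u i, w⟫ ≤ 0 → ⟪u i, f₀ + δ • w⟫ ≤ α i) := by
  classical
  set g : Fin n → ℝ := fun i =>
    if 0 < ⟪u i, w⟫ ∧ ⟪u i, f₀⟫ < α i then (α i - ⟪u i, f₀⟫) / (2 * ⟪u i, w⟫) else 1 with hg
  have hgpos : ∀ i, 0 < g i := by
    intro i
    simp only [hg]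
    split
    · rename_i hcond
      exact div_pos (by linarith [hcond.2]) (by linarith [hcond.1])
    · norm_num
  set T : Finset ℝ := insert (1:ℝ) (Finset.univ.image g) with hT
  have hTne : T.Nonempty := ⟨1, Finset.mem_insert_self _ _⟩
  set δ : ℝ := T.min' hTne with hδ
  have hδpos : 0 < δ := by
    have hmem := T.min'_mem hTne
    rw [← hδ] at hmem
    rcases Finset.mem_insert.mp hmem with h | h
    · rw [h]; norm_num
    · obtain ⟨i, _, hi⟩ := Finset.mem_image.mp h
      rw [← hi]; exact hgpos i
  have hδle : ∀ i, δ ≤ g i := fun i =>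
    Finset.min'_le _ _ (Finset.mem_insert_of_mem (Finset.mem_image_of_mem g (Finset.mem_univ i)))
  refine ⟨δ, hδpos, fun i => ?_⟩
  have hval : ⟪u i, f₀ + δ • w⟫ = ⟪u i, f₀⟫ + δ * ⟪u i, w⟫ := by
    rw [inner_add_right, real_inner_smul_right]
  have hfi : ⟪u i, f₀⟫ ≤ α i := by rw [hP] at hf₀; exact hf₀ i
  constructor
  · intro hslack
    rw [hval]
    by_cases hw : 0 < ⟪u i, w⟫
    · have hgi : g i = (α i - ⟪u i, f₀⟫) / (2 * ⟪u i, w⟫) := by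
        simp only [hg]; rw [if_pos ⟨hw, hslack⟩]
      have h3 : δ * (2 * ⟪u i, w⟫) ≤ α i - ⟪u i, f₀⟫ :=
        (le_div_iff₀ (by linarith)).mp (hgi ▸ hδle i)
      have hδw : 0 < δ * ⟪u i, w⟫ := mul_pos hδpos hw
      nlinarith
    · push_neg at hw
      nlinarith [mul_nonpos_of_nonneg_of_nonpos hδpos.le hw]
  · intro hw
    rw [hval]
    nlinarith [mul_nonpos_of_nonneg_of_nonpos hδpos.le hw]

end Geometry

section Geometry2

variable {n : ℕ} {u : Fin n → Euc d} {α : Fin n → ℝ}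

lemma part1 {P : Set (Euc d)} (hP : P = {x | ∀ i, ⟪u i, x⟫ ≤ α i})
    {F : Set (Euc d)} (hF : IsFaceOf P F) :
    normalCone P F = posHullOf {v | ∃ i, v = u i ∧ F ⊆ {x | ⟪u i, x⟫ = α i}} := by
  classical
  obtain ⟨hFne, hFconv, hFext⟩ := hF
  have hFP : F ⊆ P := hFext.1
  apply Set.Subset.antisymm
  · -- hard direction via Farkas
    intro v hv
    obtain ⟨f₀, hf₀F, hf₀⟩ := exists_minimal_active u α hP hFP hFconv hFne
    set Ifin : Finset (Fin n) := Finset.univ.filter (fun i => ⟪u i, f₀⟫ = α i) with hIfin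
    have hfar : v ∈ posHullOf (↑(Ifin.image u) : Set (Euc d)) := by
      apply farkas
      intro w hw
      have hw' : ∀ i ∈ Ifin, ⟪u i, w⟫ ≤ 0 := fun i hi =>
        hw (u i) (Finset.mem_image_of_mem u hi)
      obtain ⟨δ, hδpos, hδ⟩ := exists_delta u α hP (hFP hf₀F) w
      have hzP : f₀ + δ • w ∈ P := by
        rw [hP]
        intro i
        by_cases hi : i ∈ Ifin
        · exact (hδ i).2 (hw' i hi)
        · have hne' : ⟪u i, f₀⟫ ≠ α i := by
            intro h; exact hi (Finset.mem_filter.mpr ⟨Finset.mem_univ _, h⟩)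
          have hle : ⟪u i, f₀⟫ ≤ α i := by
            have := hFP hf₀F; rw [hP] at this; exact this i
          exact ((hδ i).1 (lt_of_le_of_ne hle hne')).le
      have := hv f₀ hf₀F _ hzP
      rw [add_sub_cancel_left, real_inner_smul_right] at this
      nlinarith
    apply posHullOf_mono _ hfar
    intro a ha
    obtain ⟨i, hi, rfl⟩ := Finset.mem_image.mp (Finset.mem_coe.mp ha)
    refine ⟨i, rfl, fun x hx => ?_⟩
    exact (hf₀ i).mp (Finset.mem_filter.mp hi).2 x hx
  · rintro x ⟨s, c, hs, hc, rfl⟩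
    intro f hf z hz
    rw [sum_inner]
    apply Finset.sum_nonpos
    intro e he
    rw [real_inner_smul_left]
    apply mul_nonpos_of_nonneg_of_nonpos (hc e)
    obtain ⟨i, rfl, hFi⟩ := hs he
    have hzi : ⟪u i, z⟫ ≤ α i := by rw [hP] at hz; exact hz i
    have hfi : ⟪u i, f⟫ = α i := hFi hf
    rw [inner_sub_right]
    linarith

end Geometry2

section Geometry3

variable {P F : Set (Euc d)}

/-- Direction ⇐ of the face correspondence. -/
lemma face_of_normalCone (hFne : F.Nonempty) (hFP : F ⊆ P) {H : Set (Euc d)}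
    (hHP : H ⊆ P) (hFH : F ⊆ H) :
    IsFaceOf (normalCone P F) (normalCone P H) := by
  refine ⟨⟨0, zero_mem_normalCone P H⟩, convex_normalCone P H, ?_, ?_⟩
  · intro v hv f hf z hz
    exact hv f (hFH hf) z hz
  · intro x hx y hy v hv hseg
    obtain ⟨a, b, ha, hb, hab, habv⟩ := hseg
    obtain ⟨f, hf⟩ := hFne
    have aux : ∀ (x' y' : Euc d) (a' b' : ℝ), x' ∈ normalCone P F → y' ∈ normalCone P F →
        0 < a' → 0 < b' → a' + b' = 1 → a' • x' + b' • y' = v → x' ∈ normalCone P H := by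
      intro x' y' a' b' hx' hy' ha' hb' hab' habv'
      intro h hh z hz
      have hxfh : ⟪x', h - f⟫ ≤ 0 := hx' f hf h (hHP hh)
      have hyfh : ⟪y', h - f⟫ ≤ 0 := hy' f hf h (hHP hh)
      have hvfh : ⟪v, h - f⟫ = 0 := by
        have h1 : ⟪v, h - f⟫ ≤ 0 := hv f (hFH hf) h (hHP hh)
        have h2 : ⟪v, f - h⟫ ≤ 0 := hv h hh f (hFP hf)
        have : f - h = -(h - f) := by abel
        rw [this, inner_neg_right] at h2
        linarith
      have hxfh0 : ⟪x', h - f⟫ = 0 := by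
        rw [← habv', inner_add_left, real_inner_smul_left, real_inner_smul_left] at hvfh
        have hp : a' * ⟪x', h - f⟫ ≤ 0 := mul_nonpos_of_nonneg_of_nonpos ha'.le hxfh
        have hq : b' * ⟪y', h - f⟫ ≤ 0 := mul_nonpos_of_nonneg_of_nonpos hb'.le hyfh
        have hp0 : a' * ⟪x', h - f⟫ = 0 := by linarith
        rcases mul_eq_zero.mp hp0 with h' | h'
        · exact absurd h' (ne_of_gt ha')
        · exact h'
      have hzf : ⟪x', z - f⟫ ≤ 0 := hx' f hf z hz
      have : z - h = (z - f) + (f - h) := by abel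
      rw [this, inner_add_right]
      have hfh : ⟪x', f - h⟫ = 0 := by
        have : f - h = -(h - f) := by abel
        rw [this, inner_neg_right, hxfh0, neg_zero]
      linarith
    exact aux x y a b hx hy ha hb hab habv

end Geometry3

section FaceStruct

variable {C S : Set (Euc d)}

lemma face_zero_mem (hCz : (0:Euc d) ∈ C) (hC2 : ∀ t : ℝ, 0 ≤ t → ∀ x ∈ C, t • x ∈ C)
    (hS : IsFaceOf C S) : (0:Euc d) ∈ S := by
  obtain ⟨⟨s, hsS⟩, _, hsub, hext⟩ := hS
  rcases eq_or_ne s 0 with rfl | hne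
  · exact hsS
  · have h2s : (2:ℝ) • s ∈ C := hC2 2 (by norm_num) s (hsub hsS)
    have hseg : s ∈ openSegment ℝ (0:Euc d) ((2:ℝ) • s) := by
      refine ⟨1/2, 1/2, by norm_num, by norm_num, by norm_num, ?_⟩
      rw [smul_zero, zero_add, smul_smul]; norm_num
    exact hext hCz h2s hsS hseg

lemma face_decomp (hC2 : ∀ t : ℝ, 0 ≤ t → ∀ x ∈ C, t • x ∈ C)
    (hCz : (0:Euc d) ∈ C) (hS : IsFaceOf C S) {x a c : Euc d}
    (hxS : x ∈ S) (haC : a ∈ C) (hcC : c ∈ C) (hsum : x = a + c) : a ∈ S := by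
  have h2a : (2:ℝ) • a ∈ C := hC2 2 (by norm_num) a haC
  have h2c : (2:ℝ) • c ∈ C := hC2 2 (by norm_num) c hcC
  have hseg : x ∈ openSegment ℝ ((2:ℝ) • a) ((2:ℝ) • c) := by
    refine ⟨1/2, 1/2, by norm_num, by norm_num, by norm_num, ?_⟩
    rw [smul_smul, smul_smul, hsum]; norm_num
  have h2aS : (2:ℝ) • a ∈ S := hS.2.2.2 h2a h2c hxS hseg
  have : a = (1/2 : ℝ) • ((2:ℝ) • a) + (1/2 : ℝ) • (0:Euc d) := by
    rw [smul_smul, smul_zero, add_zero]; norm_num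
  rw [this]
  exact hS.2.1 h2aS (face_zero_mem hCz hC2 hS) (by norm_num) (by norm_num) (by norm_num)

lemma face_smul (hC2 : ∀ t : ℝ, 0 ≤ t → ∀ x ∈ C, t • x ∈ C) (hCz : (0:Euc d) ∈ C)
    (hS : IsFaceOf C S) {x : Euc d} (hxS : x ∈ S) {t : ℝ} (ht : 0 ≤ t) : t • x ∈ S := by
  rcases eq_or_lt_of_le ht with rfl | htpos
  · rw [zero_smul]; exact face_zero_mem hCz hC2 hS
  rcases le_or_gt t 1 with hle | hgt
  · exact face_decomp hC2 hCz hS hxS (hC2 t ht x (hS.2.2.1 hxS))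
      (hC2 (1-t) (by linarith) x (hS.2.2.1 hxS))
      (by rw [← add_smul]; simp)
  · -- t > 1 : x ∈ openSegment (t•x) 0
    have htx : t • x ∈ C := hC2 t ht x (hS.2.2.1 hxS)
    have hseg : x ∈ openSegment ℝ (t • x) (0:Euc d) := by
      refine ⟨1/t, 1 - 1/t, by positivity, ?_, by ring, ?_⟩
      · have : 1/t < 1 := by rw [div_lt_one htpos]; exact hgt
        linarith
      · rw [smul_zero, add_zero, smul_smul, one_div, inv_mul_cancel₀ (by linarith), one_smul]
    exact hS.2.2.2 htx hCz hxS hseg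

lemma face_add (hC2 : ∀ t : ℝ, 0 ≤ t → ∀ x ∈ C, t • x ∈ C) (hCz : (0:Euc d) ∈ C)
    (hS : IsFaceOf C S) {x y : Euc d} (hxS : x ∈ S) (hyS : y ∈ S) : x + y ∈ S := by
  have hmid : (1/2 : ℝ) • x + (1/2 : ℝ) • y ∈ S :=
    hS.2.1 hxS hyS (by norm_num) (by norm_num) (by norm_num)
  have := face_smul hC2 hCz hS hmid (by norm_num : (0:ℝ) ≤ 2)
  rw [smul_add, smul_smul, smul_smul] at this
  norm_num at this
  exact this

lemma face_sum (hC2 : ∀ t : ℝ, 0 ≤ t → ∀ x ∈ C, t • x ∈ C) (hCz : (0:Euc d) ∈ C)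
    (hS : IsFaceOf C S) {ι : Type*} (s : Finset ι) (c : ι → ℝ) (f : ι → Euc d)
    (hc : ∀ e, 0 ≤ c e) (hes : ∀ e ∈ s, f e ∈ S) : (∑ e ∈ s, c e • f e) ∈ S := by
  classical
  induction s using Finset.induction with
  | empty => simpa using face_zero_mem hCz hC2 hS
  | @insert a s' hnotmem ih =>
    rw [Finset.sum_insert hnotmem]
    exact face_add hC2 hCz hS
      (face_smul hC2 hCz hS (hes a (Finset.mem_insert_self a s')) (hc a))
      (ih fun e hes' => hes e (Finset.mem_insert_of_mem hes'))

end FaceStruct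

section Part2
variable {n : ℕ} {u : Fin n → Euc d} {α : Fin n → ℝ}

lemma combo_eq {a b p q r : ℝ} (ha : 0 < a) (hb : 0 < b) (hab : a + b = 1)
    (hp : p ≤ r) (hq : q ≤ r) (h : a * p + b * q = r) : p = r ∧ q = r := by
  have hr : a * r + b * r = r := by rw [← add_mul, hab, one_mul]
  have h1 : b * q ≤ b * r := mul_le_mul_of_nonneg_left hq hb.le
  have h2 : a * p ≤ a * r := mul_le_mul_of_nonneg_left hp ha.le
  have hpr : r ≤ p := le_of_mul_le_mul_left (by linarith) ha
  have hqr : r ≤ q := le_of_mul_le_mul_left (by linarith) hb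
  exact ⟨le_antisymm hp hpr, le_antisymm hq hqr⟩

lemma part2_forward {P : Set (Euc d)} (hP : P = {x | ∀ i, ⟪u i, x⟫ ≤ α i})
    {F : Set (Euc d)} (hF : IsFaceOf P F)
    {S : Set (Euc d)} (hS : IsFaceOf (normalCone P F) S) :
    ∃ H : Set (Euc d), IsFaceOf P H ∧ F ⊆ H ∧ S = normalCone P H := by
  classical
  obtain ⟨hFne, hFconv, hFext⟩ := hF
  have hFP : F ⊆ P := hFext.1
  have hC2 : ∀ t : ℝ, 0 ≤ t → ∀ x ∈ normalCone P F, t • x ∈ normalCone P F :=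
    fun t ht x hx => smul_mem_normalCone ht hx
  have hCz : (0:Euc d) ∈ normalCone P F := zero_mem_normalCone P F
  set Ifin : Finset (Fin n) := Finset.univ.filter (fun i => ∀ g ∈ F, ⟪u i, g⟫ = α i) with hIfin
  set J : Finset (Fin n) := Ifin.filter (fun j => u j ∈ S) with hJ
  have huC : ∀ i ∈ Ifin, u i ∈ normalCone P F := by
    intro i hi f hf z hz
    have hact := (Finset.mem_filter.mp hi).2
    rw [inner_sub_right, hact f hf]
    rw [hP] at hz
    linarith [hz i]
  have genF := part1 hP ⟨hFne, hFconv, hFext⟩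
  have hgenC : ∀ e ∈ {v | ∃ i, v = u i ∧ F ⊆ {x | ⟪u i, x⟫ = α i}}, e ∈ normalCone P F := by
    intro e he
    rw [genF]
    exact mem_posHullOf_self he
  -- Step A : separating vectors for indices outside J
  have hwex : ∀ i, i ∈ Ifin → i ∉ J →
      ∃ w : Euc d, (∀ k ∈ Ifin, ⟪u k, w⟫ ≤ 0) ∧ (∀ j ∈ J, ⟪u j, w⟫ = 0) ∧ ⟪u i, w⟫ < 0 := by
    intro i hiI hiJ
    by_contra hcon
    push_neg at hcon
    set Ai : Finset (Euc d) := Ifin.image u ∪ J.image (fun j => -u j) with hAi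
    have hfar : -u i ∈ posHullOf (↑Ai : Set (Euc d)) := by
      apply farkas
      intro w hw
      have hk : ∀ k ∈ Ifin, ⟪u k, w⟫ ≤ 0 := fun k hk =>
        hw (u k) (Finset.mem_union_left _ (Finset.mem_image_of_mem u hk))
      have hj : ∀ j ∈ J, ⟪u j, w⟫ = 0 := by
        intro j hj
        have h1 := hk j (Finset.filter_subset _ _ hj)
        have h2 := hw (-u j) (Finset.mem_union_right _ (Finset.mem_image_of_mem _ hj))
        rw [inner_neg_left] at h2
        linarith
      have := hcon w hk hj
      rw [inner_neg_left]; linarith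
    obtain ⟨s, c, hs, hc, hsum⟩ := hfar
    set s1 : Finset (Euc d) := s.filter (fun e => -e ∈ S) with hs1
    set s2 : Finset (Euc d) := s.filter (fun e => ¬ -e ∈ S) with hs2
    have hsplit : ∑ e ∈ s, c e • e = ∑ e ∈ s1, c e • e + ∑ e ∈ s2, c e • e :=
      (Finset.sum_filter_add_sum_filter_not s _ _).symm
    have h0 : (0:Euc d) = u i + (∑ e ∈ s1, c e • e + ∑ e ∈ s2, c e • e) := by
      rw [← hsplit, ← hsum]; abel
    have ha : (∑ e ∈ s1, c e • (-e)) = u i + ∑ e ∈ s2, c e • e := by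
      have e1 : (∑ e ∈ s1, c e • (-e)) - (u i + ∑ e ∈ s2, c e • e)
          = -(u i + (∑ e ∈ s1, c e • e + ∑ e ∈ s2, c e • e)) := by
        simp only [smul_neg, Finset.sum_neg_distrib]; abel
      rw [← h0, neg_zero] at e1
      exact sub_eq_zero.mp e1
    have haS : (∑ e ∈ s1, c e • (-e)) ∈ S := by
      apply face_sum hC2 hCz hS s1 c (fun e => -e) hc
      intro e he1
      exact (Finset.mem_filter.mp he1).2
    have hs2C : ∀ e ∈ s2, e ∈ normalCone P F := by
      intro e he2
      obtain ⟨hes, hneS⟩ := Finset.mem_filter.mp he2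
      rcases Finset.mem_union.mp (Finset.mem_coe.mp (hs hes)) with himg | himg
      · obtain ⟨k, hk, rfl⟩ := Finset.mem_image.mp himg
        exact huC k hk
      · obtain ⟨j, hj, rfl⟩ := Finset.mem_image.mp himg
        exfalso
        apply hneS
        rw [neg_neg]
        exact (Finset.mem_filter.mp hj).2
    have hc2C : (∑ e ∈ s2, c e • e) ∈ normalCone P F :=
      sum_mem_normalCone s2 c id hc hs2C
    have huiS : u i ∈ S := face_decomp hC2 hCz hS haS (huC i hiI) hc2C ha
    exact hiJ (Finset.mem_filter.mpr ⟨hiI, huiS⟩)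
  -- Step B : the vector w
  have hwex' : ∀ i : Fin n, ∃ w : Euc d, i ∈ Ifin \ J →
      ((∀ k ∈ Ifin, ⟪u k, w⟫ ≤ 0) ∧ (∀ j ∈ J, ⟪u j, w⟫ = 0) ∧ ⟪u i, w⟫ < 0) := by
    intro i
    by_cases hi : i ∈ Ifin \ J
    · obtain ⟨hiI, hiJ⟩ := Finset.mem_sdiff.mp hi
      obtain ⟨w, hw⟩ := hwex i hiI hiJ
      exact ⟨w, fun _ => hw⟩
    · exact ⟨0, fun h => absurd h hi⟩
  choose W hW using hwex'
  set w : Euc d := ∑ i ∈ Ifin \ J, W i with hwdef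
  have hwIfin : ∀ k ∈ Ifin, ⟪u k, w⟫ ≤ 0 := by
    intro k hk
    rw [hwdef, inner_sum]
    exact Finset.sum_nonpos fun i hi => ((hW i) hi).1 k hk
  have hwJ : ∀ j ∈ J, ⟪u j, w⟫ = 0 := by
    intro j hj
    rw [hwdef, inner_sum]
    exact Finset.sum_eq_zero fun i hi => ((hW i) hi).2.1 j hj
  have hwneg : ∀ i ∈ Ifin \ J, ⟪u i, w⟫ < 0 := by
    intro i hi
    rw [hwdef, inner_sum]
    have hterm : ⟪u i, W i⟫ < 0 := ((hW i) hi).2.2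
    have hrest : ∑ k ∈ (Ifin \ J).erase i, ⟪u i, W k⟫ ≤ 0 :=
      Finset.sum_nonpos fun k hk =>
        ((hW k) (Finset.mem_of_mem_erase hk)).1 i (Finset.mem_sdiff.mp hi).1
    rw [← Finset.add_sum_erase _ _ hi]
    linarith
  -- Step C : the point xδ
  obtain ⟨f₀, hf₀F, hf₀⟩ := exists_minimal_active u α hP hFP hFconv hFne
  have hIfin_iff : ∀ i, i ∈ Ifin ↔ ⟪u i, f₀⟫ = α i := by
    intro i
    rw [hIfin, Finset.mem_filter]
    constructor
    · rintro ⟨_, h⟩; exact h f₀ hf₀F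
    · intro h; exact ⟨Finset.mem_univ _, (hf₀ i).mp h⟩
  obtain ⟨δ, hδpos, hδ⟩ := exists_delta u α hP (hFP hf₀F) w
  set xδ : Euc d := f₀ + δ • w with hxδ
  have hvali : ∀ i, ⟪u i, xδ⟫ = ⟪u i, f₀⟫ + δ * ⟪u i, w⟫ := by
    intro i; rw [hxδ, inner_add_right, real_inner_smul_right]
  have hxP : xδ ∈ P := by
    rw [hP]
    intro i
    by_cases hi : i ∈ Ifin
    · exact (hδ i).2 (hwIfin i hi)
    · have hne' : ⟪u i, f₀⟫ ≠ α i := fun h => hi ((hIfin_iff i).mpr h)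
      have hle : ⟪u i, f₀⟫ ≤ α i := by
        have := hFP hf₀F; rw [hP] at this; exact this i
      exact ((hδ i).1 (lt_of_le_of_ne hle hne')).le
  have hxact : ∀ i, ⟪u i, xδ⟫ = α i → i ∈ J := by
    intro i hi
    by_contra hiJ
    by_cases hiI : i ∈ Ifin
    · have hneg := hwneg i (Finset.mem_sdiff.mpr ⟨hiI, hiJ⟩)
      have := hvali i
      rw [(hIfin_iff i).mp hiI] at this
      nlinarith [mul_pos hδpos (neg_pos.mpr hneg)]
    · have hne' : ⟪u i, f₀⟫ ≠ α i := fun h => hiI ((hIfin_iff i).mpr h)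
      have hle : ⟪u i, f₀⟫ ≤ α i := by
        have := hFP hf₀F; rw [hP] at this; exact this i
      exact absurd hi (ne_of_lt ((hδ i).1 (lt_of_le_of_ne hle hne')))
  -- the face H
  set H : Set (Euc d) := {x | x ∈ P ∧ ∀ j ∈ J, ⟪u j, x⟫ = α j} with hH
  have hJcond : ∀ j ∈ J, ∀ g ∈ F, ⟪u j, g⟫ = α j := fun j hj =>
    (Finset.mem_filter.mp (Finset.filter_subset _ _ hj)).2
  have hFH : F ⊆ H := fun f hf => ⟨hFP hf, fun j hj => hJcond j hj f hf⟩
  have hxH : xδ ∈ H := by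
    refine ⟨hxP, fun j hj => ?_⟩
    rw [hvali j, hwJ j hj, mul_zero, add_zero]
    exact (hIfin_iff j).mp (Finset.filter_subset _ _ hj)
  have hPconv : Convex ℝ P := by
    rw [hP]
    intro x hx y hy a b ha hb hab
    intro i
    rw [inner_add_right, real_inner_smul_right, real_inner_smul_right]
    have hr : a * α i + b * α i = α i := by rw [← add_mul, hab, one_mul]
    linarith [mul_le_mul_of_nonneg_left (hx i) ha, mul_le_mul_of_nonneg_left (hy i) hb]
  have hHface : IsFaceOf P H := by
    refine ⟨⟨xδ, hxH⟩, ?_, fun x hx => hx.1, ?_⟩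
    · intro x hx y hy a b ha hb hab
      refine ⟨hPconv hx.1 hy.1 ha hb hab, fun j hj => ?_⟩
      rw [inner_add_right, real_inner_smul_right, real_inner_smul_right, hx.2 j hj, hy.2 j hj]
      have : a * α j + b * α j = (a + b) * α j := by ring
      rw [this, hab, one_mul]
    · intro x hx y hy v hv hseg
      obtain ⟨a, b, ha, hb, hab, habv⟩ := hseg
      have hvP : v ∈ P := hv.1
      have key : ∀ j ∈ J, ⟪u j, x⟫ = α j ∧ ⟪u j, y⟫ = α j := by
        intro j hj
        have hcomb : a * ⟪u j, x⟫ + b * ⟪u j, y⟫ = α j := by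
          rw [← real_inner_smul_right, ← real_inner_smul_right, ← inner_add_right, habv]
          exact hv.2 j hj
        have hx' : ⟪u j, x⟫ ≤ α j := by rw [hP] at hx; exact hx j
        have hy' : ⟪u j, y⟫ ≤ α j := by rw [hP] at hy; exact hy j
        exact combo_eq ha hb hab hx' hy' hcomb
      exact ⟨hx, fun j hj => (key j hj).1⟩
  refine ⟨H, hHface, hFH, ?_⟩
  apply Set.Subset.antisymm
  · -- S ⊆ normalCone P H
    intro v hv
    have hvC : v ∈ normalCone P F := hS.2.2.1 hv
    rw [genF] at hvC
    obtain ⟨s, c, hs, hc, hveq⟩ := hvC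
    intro h hh z hz
    rw [hveq, sum_inner]
    apply Finset.sum_nonpos
    intro e he
    rw [real_inner_smul_left]
    rcases eq_or_lt_of_le (hc e) with hce | hce
    · rw [← hce, zero_mul]
    · apply mul_nonpos_of_nonneg_of_nonpos (hc e)
      have heS : e ∈ S := by
        have hrest : ∑ e' ∈ s.erase e, c e' • e' ∈ normalCone P F :=
          sum_mem_normalCone _ c id hc fun e' he' => hgenC e' (hs (Finset.mem_of_mem_erase he'))
        have hceC : c e • e ∈ normalCone P F :=
          smul_mem_normalCone (hc e) (hgenC e (hs he))
        have hdec : v = c e • e + ∑ e' ∈ s.erase e, c e' • e' := by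
          rw [hveq, ← Finset.add_sum_erase _ _ he]
        have hceS := face_decomp hC2 hCz hS hv hceC hrest hdec
        have := face_smul hC2 hCz hS hceS (inv_nonneg.mpr (hc e))
        rwa [smul_smul, inv_mul_cancel₀ (ne_of_gt hce), one_smul] at this
      obtain ⟨i, rfl, hFi⟩ := hs he
      have hiI : i ∈ Ifin :=
        Finset.mem_filter.mpr ⟨Finset.mem_univ _, fun g hg => hFi hg⟩
      have hiJ : i ∈ J := Finset.mem_filter.mpr ⟨hiI, heS⟩
      have hhi : ⟪u i, h⟫ = α i := hh.2 i hiJ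
      have hz' : ⟪u i, z⟫ ≤ α i := by rw [hP] at hz; exact hz i
      rw [inner_sub_right, hhi]
      linarith
  · -- normalCone P H ⊆ S
    rw [part1 hP hHface]
    rintro x ⟨s, c, hs, hc, rfl⟩
    apply face_sum hC2 hCz hS s c id hc
    intro e he
    obtain ⟨i, rfl, hHFi⟩ := hs he
    have : ⟪u i, xδ⟫ = α i := hHFi hxH
    exact (Finset.mem_filter.mp (hxact i this)).2

end Part2


end AuxProofs

theorem normalCone_pos_hull_of_facet_normals {d n : ℕ}
    (u : Fin n → Euc d) (α : Fin n → ℝ) (hu : ∀ i, ‖u i‖ = 1)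
    (P : Set (Euc d)) (hP : P = {x | ∀ i, ⟪u i, x⟫ ≤ α i})
    (hfull : sdim P = d)
    (hfacet : ∀ i, sdim (P ∩ {x | ⟪u i, x⟫ = α i}) = d - 1)
    (F : Set (Euc d)) (hF : IsFaceOf P F) :
    normalCone P F =
      posHullOf {v | ∃ i, v = u i ∧ F ⊆ {x | ⟪u i, x⟫ = α i}} ∧
    (∀ S : Set (Euc d), IsFaceOf (normalCone P F) S ↔
      ∃ H : Set (Euc d), IsFaceOf P H ∧ F ⊆ H ∧ S = normalCone P H) := by
  constructor
  · exact part1 hP hF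
  · intro S
    constructor
    · intro hS
      exact part2_forward hP hF hS
    · rintro ⟨H, hH, hFH, rfl⟩
      exact face_of_normalCone hF.1 hF.2.2.1 hH.2.2.1 hFH
end
end
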